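/- arXiv:1810.06708 — 6 statements merged into one kernel-verified Lean document; each statement's English description precedes it below -/
import Mathlib

section
/- If f, g : R → R are (1/q)-Lipschitz and 0 < δ ≤ 1 with δ ∈ q^ℤ, then the intersection V_δ(f) ∩ H_δ(g) of the vertical δ-neighborhood of f and the horizontal δ-neighborhood of g is exactly the ball of radius δ centered at the unique intersection point of the curves V(f) and H(g). -/
open scoped Classical
open MeasureTheory Filter

noncomputable section

/-- A complete, locally compact non-Archimedean field with residue field of
order `q`, absolute value normalized so that a uniformizer has norm `1/q`.
`reps` is a set of `q` coset representatives for the residue field: they cover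
the ring of integers by discs of radius `1/q` and are pairwise at distance
`> 1/q`. -/
structure NAField (K : Type*) [NormedField K] where
  na : IsNonarchimedean (fun x : K => ‖x‖)
  complete : CompleteSpace K
  locCompact : LocallyCompactSpace K
  q : ℕ
  one_lt_q : 1 < q
  valGroup : ∀ x : K, x ≠ 0 → ∃ n : ℤ, ‖x‖ = (q : ℝ) ^ n
  exists_unif : ∃ ϖ : K, ‖ϖ‖ = (q : ℝ)⁻¹
  reps : Finset K
  card_reps : reps.card = q
  norm_reps : ∀ s ∈ reps, ‖s‖ ≤ 1
  reps_cover : ∀ x : K, ‖x‖ ≤ 1 → ∃ s ∈ reps, ‖x - s‖ ≤ (q : ℝ)⁻¹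
  reps_sep : ∀ s ∈ reps, ∀ t ∈ reps, s ≠ t → (q : ℝ)⁻¹ < ‖s - t‖

variable {K : Type*} [NormedField K]

/-- `f : R → R` is `(1/q)`-Lipschitz on the ring of integers. -/
def NAField.IsLip (F : NAField K) (f : K → K) : Prop :=
  (∀ t : K, ‖t‖ ≤ 1 → ‖f t‖ ≤ 1) ∧
  ∀ t₁ t₂ : K, ‖t₁‖ ≤ 1 → ‖t₂‖ ≤ 1 → ‖f t₁ - f t₂‖ ≤ ((F.q : ℝ))⁻¹ * ‖t₁ - t₂‖

/-- The unit polydisc `R² ⊆ K²`. -/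
def unitPoly (K : Type*) [NormedField K] : Set (K × K) := {p | ‖p.1‖ ≤ 1 ∧ ‖p.2‖ ≤ 1}

/-- Horizontal `δ`-neighborhood `H_δ(f) = {(t, f t + θ) : t ∈ R, |θ| ≤ δ}`. -/
def Hnbhd (f : K → K) (δ : ℝ) : Set (K × K) :=
  {p | ∃ t θ : K, ‖t‖ ≤ 1 ∧ ‖θ‖ ≤ δ ∧ p = (t, f t + θ)}

/-- Vertical `δ`-neighborhood `V_δ(f) = {(f t + θ, t) : t ∈ R, |θ| ≤ δ}`. -/
def Vnbhd (f : K → K) (δ : ℝ) : Set (K × K) :=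
  {p | ∃ t θ : K, ‖t‖ ≤ 1 ∧ ‖θ‖ ≤ δ ∧ p = (f t + θ, t)}

/-- The automorphism `T(x,y) = (a y + b (x^q - x), x)`. -/
def NAField.Tmap (F : NAField K) (a b : K) : K × K → K × K :=
  fun p => (a * p.2 + b * (p.1 ^ F.q - p.1), p.1)

/-- The inverse automorphism `T⁻¹(x,y) = (y, a⁻¹ (x - b (y^q - y)))`. -/
def NAField.Tinv (F : NAField K) (a b : K) : K × K → K × K :=
  fun p => (p.2, a⁻¹ * (p.1 - b * (p.2 ^ F.q - p.2)))

/-- The attractor `A_T = ⋂_{n ≥ 1} Tⁿ(R²)`. -/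
def NAField.Attractor (F : NAField K) (a b : K) : Set (K × K) :=
  ⋂ n ∈ {n : ℕ | 1 ≤ n}, (F.Tmap a b)^[n] '' unitPoly K

/-- The basin of attraction `B_T = ⋃_{n ≥ 1} T⁻ⁿ(R²)`. -/
def NAField.Basin (F : NAField K) (a b : K) : Set (K × K) :=
  ⋃ n ∈ {n : ℕ | 1 ≤ n}, (F.Tmap a b)^[n] ⁻¹' unitPoly K

/-- `T^k` for `k : ℤ`. -/
def NAField.iterZ (F : NAField K) (a b : K) (k : ℤ) : K × K → K × K :=
  if 0 ≤ k then (F.Tmap a b)^[k.toNat] else (F.Tinv a b)^[(-k).toNat]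

/-- The image under the conjugacy `ω` of the cylinder set of bisequences
agreeing with `s` on coordinates `-M, …, M`: points of the attractor whose
itinerary through the residue strips matches `s` on those coordinates. -/
def NAField.Cyl (F : NAField K) (a b : K) (s : ℤ → K) (M : ℕ) : Set (K × K) :=
  {p | p ∈ F.Attractor a b ∧
    ∀ k : ℤ, |k| ≤ (M : ℤ) → ‖(F.iterZ a b k p).1 - s k‖ ≤ ((F.q : ℝ))⁻¹}
theorem stmt3 (F : NAField K) (f g : K → K) (hf : F.IsLip f) (hg : F.IsLip g)
    (r : ℕ) (δ : ℝ) (hδ : δ = ((F.q : ℝ))⁻¹ ^ r) :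
    ∃ x₀ y₀ : K, ‖x₀‖ ≤ 1 ∧ ‖y₀‖ ≤ 1 ∧ x₀ = f y₀ ∧ y₀ = g x₀ ∧
      Vnbhd f δ ∩ Hnbhd g δ = {p : K × K | max ‖p.1 - x₀‖ ‖p.2 - y₀‖ ≤ δ} := by
  haveI : CompleteSpace K := F.complete
  have hq1 : (1:ℝ) < F.q := by exact_mod_cast F.one_lt_q
  have hc0 : (0:ℝ) < ((F.q:ℝ))⁻¹ := by positivity
  have hc1 : ((F.q:ℝ))⁻¹ < 1 := by
    rw [inv_lt_one_iff₀]; right; exact hq1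
  have hδ0 : 0 ≤ δ := by rw [hδ]; positivity
  have hδ1 : δ ≤ 1 := by rw [hδ]; exact pow_le_one₀ hc0.le hc1.le
  -- fixed point of y ↦ g (f y) on the closed unit ball
  have hclosed : IsClosed (Metric.closedBall (0:K) 1) := Metric.isClosed_closedBall
  haveI := hclosed.completeSpace_coe
  haveI : Nonempty (Metric.closedBall (0:K) 1) :=
    ⟨⟨0, Metric.mem_closedBall_self zero_le_one⟩⟩
  set c : NNReal := ⟨((F.q:ℝ))⁻¹, hc0.le⟩ with hcdef
  have φmem : ∀ y : Metric.closedBall (0:K) 1, g (f y) ∈ Metric.closedBall (0:K) 1 := by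
    intro y
    rw [mem_closedBall_zero_iff]
    exact hg.1 _ (hf.1 _ (mem_closedBall_zero_iff.mp y.2))
  set φ : Metric.closedBall (0:K) 1 → Metric.closedBall (0:K) 1 :=
    fun y => ⟨g (f y), φmem y⟩ with hφdef
  have hcontract : ContractingWith c φ := by
    refine ⟨?_, LipschitzWith.of_dist_le_mul ?_⟩
    · exact_mod_cast hc1
    · intro x y
      have hx : ‖(x:K)‖ ≤ 1 := mem_closedBall_zero_iff.mp x.2
      have hy : ‖(y:K)‖ ≤ 1 := mem_closedBall_zero_iff.mp y.2
      have h1 : ‖g (f x) - g (f y)‖ ≤ ((F.q:ℝ))⁻¹ * ‖f x - f y‖ :=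
        hg.2 _ _ (hf.1 _ hx) (hf.1 _ hy)
      have h2 : ‖f x - f y‖ ≤ ((F.q:ℝ))⁻¹ * ‖(x:K) - y‖ := hf.2 _ _ hx hy
      have hn : (0:ℝ) ≤ ‖(x:K) - y‖ := norm_nonneg _
      have : ‖g (f x) - g (f y)‖ ≤ ((F.q:ℝ))⁻¹ * ‖(x:K) - y‖ := by
        nlinarith [mul_le_mul_of_nonneg_left h2 hc0.le,
          mul_nonneg (mul_nonneg hc0.le (sub_nonneg.mpr hc1.le)) hn]
      simpa [hφdef, show (c:ℝ) = ((F.q:ℝ))⁻¹ from rfl, Subtype.dist_eq, dist_eq_norm] using this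
  set yfix : Metric.closedBall (0:K) 1 := ContractingWith.fixedPoint φ hcontract with hyfixdef
  have hyfix : φ yfix = yfix := by
    rw [hyfixdef]; exact hcontract.fixedPoint_isFixedPt
  set y₀ : K := (yfix : K) with hy₀def
  have hy₀mem : ‖y₀‖ ≤ 1 := mem_closedBall_zero_iff.mp yfix.2
  have hfix : g (f y₀) = y₀ := congrArg Subtype.val hyfix
  set x₀ : K := f y₀ with hx₀def
  have hx₀mem : ‖x₀‖ ≤ 1 := hf.1 _ hy₀mem
  refine ⟨x₀, y₀, hx₀mem, hy₀mem, rfl, hfix.symm, ?_⟩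
  have na : ∀ a b : K, ‖a + b‖ ≤ max ‖a‖ ‖b‖ := fun a b => F.na a b
  ext p
  constructor
  · rintro ⟨⟨t, θ, ht, hθ, hp1⟩, ⟨s, η, hs, hη, hp2⟩⟩
    have hps : p.1 = s := by rw [hp2]
    have hpt : p.2 = t := by rw [hp1]
    have h1 : p.1 = f t + θ := by rw [hp1]
    have h2 : p.2 = g s + η := by rw [hp2]
    set A : ℝ := ‖p.1 - x₀‖ with hA
    set B : ℝ := ‖p.2 - y₀‖ with hB
    have hA0 : 0 ≤ A := norm_nonneg _
    have hB0 : 0 ≤ B := norm_nonneg _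
    have keyA : A ≤ max (((F.q:ℝ))⁻¹ * B) δ := by
      have : p.1 - x₀ = (f t - f y₀) + θ := by rw [h1, hx₀def]; ring
      calc A = ‖(f t - f y₀) + θ‖ := by rw [hA, this]
        _ ≤ max ‖f t - f y₀‖ ‖θ‖ := na _ _
        _ ≤ max (((F.q:ℝ))⁻¹ * B) δ := by
            apply max_le_max _ hθ
            rw [hB, hpt]
            exact hf.2 t y₀ ht hy₀mem
    have keyB : B ≤ max (((F.q:ℝ))⁻¹ * A) δ := by
      have : p.2 - y₀ = (g s - g x₀) + η := by rw [h2, ← hfix, hx₀def]; ring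
      calc B = ‖(g s - g x₀) + η‖ := by rw [hB, this]
        _ ≤ max ‖g s - g x₀‖ ‖η‖ := na _ _
        _ ≤ max (((F.q:ℝ))⁻¹ * A) δ := by
            apply max_le_max _ hη
            rw [hA, hps]
            exact hg.2 s x₀ hs hx₀mem
    have hAδ : A ≤ δ := by
      rcases le_max_iff.mp keyA with h | h
      · rcases le_max_iff.mp keyB with h' | h'
        · nlinarith
        · nlinarith
      · exact h
    have hBδ : B ≤ δ := by
      rcases le_max_iff.mp keyB with h | h
      · rcases le_max_iff.mp keyA with h' | h'
        · nlinarith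
        · nlinarith
      · exact h
    exact max_le hAδ hBδ
  · intro hp
    have hAδ : ‖p.1 - x₀‖ ≤ δ := le_trans (le_max_left _ _) hp
    have hBδ : ‖p.2 - y₀‖ ≤ δ := le_trans (le_max_right _ _) hp
    have hp1 : ‖p.1‖ ≤ 1 := by
      have := na (p.1 - x₀) x₀
      rw [sub_add_cancel] at this
      exact le_trans this (max_le (le_trans hAδ hδ1) hx₀mem)
    have hp2 : ‖p.2‖ ≤ 1 := by
      have := na (p.2 - y₀) y₀
      rw [sub_add_cancel] at this
      exact le_trans this (max_le (le_trans hBδ hδ1) hy₀mem)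
    constructor
    · refine ⟨p.2, p.1 - f p.2, hp2, ?_, ?_⟩
      · have heq : p.1 - f p.2 = (p.1 - x₀) + (f y₀ - f p.2) := by
          rw [hx₀def]; ring
        rw [heq]
        refine le_trans (na _ _) (max_le hAδ ?_)
        have h1 : ‖f y₀ - f p.2‖ ≤ ((F.q:ℝ))⁻¹ * ‖y₀ - p.2‖ := hf.2 _ _ hy₀mem hp2
        have h2 : ‖y₀ - p.2‖ ≤ δ := by rwa [norm_sub_rev]
        nlinarith
      · ext <;> simp
    · refine ⟨p.1, p.2 - g p.1, hp1, ?_, ?_⟩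
      · have heq : p.2 - g p.1 = (p.2 - y₀) + (g x₀ - g p.1) := by
          rw [← hfix, hx₀def]; ring
        rw [heq]
        refine le_trans (na _ _) (max_le hBδ ?_)
        have h1 : ‖g x₀ - g p.1‖ ≤ ((F.q:ℝ))⁻¹ * ‖x₀ - p.1‖ := hg.2 _ _ hx₀mem hp1
        have h2 : ‖x₀ - p.1‖ ≤ δ := by rwa [norm_sub_rev]
        nlinarith
      · ext <;> simp
end
end

section
/- Let φ(t) = b(t^q - t) with |b| = q. If t1, t2 ∈ R satisfy |t1 - t2| ≤ 1/q, then |φ(t1) - φ(t2)| = q·|t1 - t2|; i.e., φ expands distances by exactly the factor q on each residue disc. -/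
open scoped Classical
open MeasureTheory Filter

noncomputable section

variable {K : Type*} [NormedField K]

lemma na_sum_le' (na : IsNonarchimedean (fun x : K => ‖x‖)) {ι : Type*}
    (s : Finset ι) (f : ι → K) {C : ℝ} (hC : 0 ≤ C) (h : ∀ i ∈ s, ‖f i‖ ≤ C) :
    ‖∑ i ∈ s, f i‖ ≤ C := by
  classical
  induction s using Finset.induction with
  | empty => simpa using hC
  | @insert a s hx ih =>
    rw [Finset.sum_insert hx]
    refine le_trans (na _ _) (max_le (h a (Finset.mem_insert_self a s)) ?_)
    exact ih fun i hi => h i (Finset.mem_insert_of_mem hi)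

lemma na_norm_sub_eq' (na : IsNonarchimedean (fun x : K => ‖x‖)) {x y : K}
    (h : ‖x‖ < ‖y‖) : ‖x - y‖ = ‖y‖ := by
  have h1 : ‖x - y‖ ≤ ‖y‖ := by
    have := na x (-y)
    simp only [sub_eq_add_neg, norm_neg] at this ⊢
    exact this.trans (max_le h.le le_rfl)
  refine le_antisymm h1 ?_
  have h2 : ‖y‖ ≤ max ‖x‖ ‖x - y‖ := by
    have := na x (-(x - y))
    simp only [norm_neg] at this
    calc ‖y‖ = ‖x + -(x - y)‖ := by ring_nf
    _ ≤ _ := this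
  rcases max_cases ‖x‖ ‖x - y‖ with ⟨he, _⟩ | ⟨he, _⟩
  · exact absurd ((he ▸ h2).trans_lt h) (lt_irrefl _)
  · rwa [he] at h2

def NAField.Oball (F : NAField K) : AddSubgroup K where
  carrier := {x | ‖x‖ ≤ 1}
  zero_mem' := by simp
  add_mem' := fun ha hb => le_trans (F.na _ _) (max_le ha hb)
  neg_mem' := by intro a ha; simpa using ha

def NAField.mball (F : NAField K) : AddSubgroup K where
  carrier := {x | ‖x‖ ≤ (F.q : ℝ)⁻¹}
  zero_mem' := by simp
  add_mem' := fun ha hb => le_trans (F.na _ _) (max_le ha hb)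
  neg_mem' := by intro a ha; simpa using ha

lemma NAField.norm_q_le (F : NAField K) : ‖(F.q : K)‖ ≤ (F.q : ℝ)⁻¹ := by
  set H := F.mball.addSubgroupOf F.Oball with hH
  have hmem : ∀ x : F.Oball, x ∈ H ↔ ‖(x : K)‖ ≤ (F.q : ℝ)⁻¹ := fun x =>
    AddSubgroup.mem_addSubgroupOf
  let ψ : {s // s ∈ F.reps} → F.Oball ⧸ H := fun s =>
    QuotientAddGroup.mk ⟨s.1, F.norm_reps s.1 s.2⟩
  have hbij : Function.Bijective ψ := by
    constructor
    · rintro ⟨s, hs⟩ ⟨t, ht⟩ hst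
      rw [QuotientAddGroup.eq] at hst
      rw [hmem] at hst
      simp only [AddSubgroup.coe_add, AddSubgroup.coe_neg] at hst
      by_contra hne
      have hne' : s ≠ t := by simpa using hne
      have hsep := F.reps_sep s hs t ht hne'
      have : (F.q : ℝ)⁻¹ < ‖-s + t‖ := by
        rw [show -s + t = -(s - t) by ring, norm_neg]; exact hsep
      exact absurd hst (not_le.mpr this)
    · intro x
      induction x using QuotientAddGroup.induction_on with
      | H y =>
        obtain ⟨s, hs, hcov⟩ := F.reps_cover y.1 y.2
        refine ⟨⟨s, hs⟩, ?_⟩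
        rw [QuotientAddGroup.eq, hmem]
        simp only [AddSubgroup.coe_add, AddSubgroup.coe_neg]
        rwa [show -s + (y : K) = (y : K) - s by ring]
  have hcard : Nat.card (F.Oball ⧸ H) = F.q := by
    rw [← Nat.card_eq_of_bijective ψ hbij, Nat.card_eq_fintype_card,
      Fintype.card_coe, F.card_reps]
  have hone : (1 : K) ∈ F.Oball := by simp [NAField.Oball]
  have hz := card_nsmul_eq_zero' (x := (QuotientAddGroup.mk ⟨1, hone⟩ : F.Oball ⧸ H))
  rw [hcard, ← QuotientAddGroup.mk_nsmul, QuotientAddGroup.eq_zero_iff, hmem] at hz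
  simpa using hz

theorem stmt5 (F : NAField K) (b : K) (hb : ‖b‖ = (F.q : ℝ))
    (t₁ t₂ : K) (h₁ : ‖t₁‖ ≤ 1) (h₂ : ‖t₂‖ ≤ 1)
    (h : ‖t₁ - t₂‖ ≤ ((F.q : ℝ))⁻¹) :
    ‖b * (t₁ ^ F.q - t₁) - b * (t₂ ^ F.q - t₂)‖ = (F.q : ℝ) * ‖t₁ - t₂‖ := by
  classical
  have na := F.na
  have hq1 : (1 : ℝ) < F.q := by exact_mod_cast F.one_lt_q
  have hq0 : (0 : ℝ) < F.q := by linarith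
  have hqinv : (F.q : ℝ)⁻¹ < 1 := by
    rw [inv_lt_one_iff₀]; right; exact hq1
  have hqinv0 : (0 : ℝ) ≤ (F.q : ℝ)⁻¹ := by positivity
  by_cases hd : t₁ = t₂
  · subst hd; simp
  set d := t₁ - t₂ with hdd
  set S := ∑ i ∈ Finset.range F.q, t₁ ^ i * t₂ ^ (F.q - 1 - i) with hS
  have hfact : b * (t₁ ^ F.q - t₁) - b * (t₂ ^ F.q - t₂) = b * ((S - 1) * d) := by
    have hg := geom_sum₂_mul t₁ t₂ F.q
    rw [← hS] at hg
    have : (S - 1) * d = S * (t₁ - t₂) - (t₁ - t₂) := by rw [hdd]; ring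
    rw [this, hg]; ring
  have hpow : ∀ i : ℕ, ‖t₁ ^ i - t₂ ^ i‖ ≤ ‖d‖ := by
    intro i
    induction i with
    | zero => simp
    | succ n ih =>
      have heq : t₁ ^ (n + 1) - t₂ ^ (n + 1) = t₁ * (t₁ ^ n - t₂ ^ n) + d * t₂ ^ n := by
        rw [hdd]; ring
      rw [heq]
      refine le_trans (na _ _) (max_le ?_ ?_)
      · calc ‖t₁ * (t₁ ^ n - t₂ ^ n)‖ = ‖t₁‖ * ‖t₁ ^ n - t₂ ^ n‖ := norm_mul _ _
          _ ≤ 1 * ‖d‖ := mul_le_mul h₁ ih (norm_nonneg _) zero_le_one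
          _ = ‖d‖ := one_mul _
      · calc ‖d * t₂ ^ n‖ = ‖d‖ * ‖t₂ ^ n‖ := norm_mul _ _
          _ ≤ ‖d‖ * 1 := by
              refine mul_le_mul_of_nonneg_left ?_ (norm_nonneg _)
              rw [norm_pow]; exact pow_le_one₀ (norm_nonneg _) h₂
          _ = ‖d‖ := mul_one _
  have hSsub : ‖S - (F.q : K) * t₂ ^ (F.q - 1)‖ ≤ (F.q : ℝ)⁻¹ := by
    have heq : S - (F.q : K) * t₂ ^ (F.q - 1)
        = ∑ i ∈ Finset.range F.q, (t₁ ^ i - t₂ ^ i) * t₂ ^ (F.q - 1 - i) := by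
      have h1 : ∀ i ∈ Finset.range F.q, (t₁ ^ i - t₂ ^ i) * t₂ ^ (F.q - 1 - i)
          = t₁ ^ i * t₂ ^ (F.q - 1 - i) - t₂ ^ (F.q - 1) := by
        intro i hi
        rw [Finset.mem_range] at hi
        have h2 : t₂ ^ (F.q - 1) = t₂ ^ i * t₂ ^ (F.q - 1 - i) := by
          rw [← pow_add]; congr 1; omega
        rw [h2]; ring
      rw [Finset.sum_congr rfl h1, Finset.sum_sub_distrib, ← hS, Finset.sum_const,
        Finset.card_range, nsmul_eq_mul]
    rw [heq]
    refine na_sum_le' na _ _ hqinv0 fun i hi => ?_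
    calc ‖(t₁ ^ i - t₂ ^ i) * t₂ ^ (F.q - 1 - i)‖
        = ‖t₁ ^ i - t₂ ^ i‖ * ‖t₂ ^ (F.q - 1 - i)‖ := norm_mul _ _
      _ ≤ ‖d‖ * 1 := by
          refine mul_le_mul (hpow i) ?_ (norm_nonneg _) (norm_nonneg _)
          rw [norm_pow]; exact pow_le_one₀ (norm_nonneg _) h₂
      _ = ‖d‖ := mul_one _
      _ ≤ (F.q : ℝ)⁻¹ := h
  have hSnorm : ‖S‖ ≤ (F.q : ℝ)⁻¹ := by
    have heq : S = (S - (F.q : K) * t₂ ^ (F.q - 1)) + (F.q : K) * t₂ ^ (F.q - 1) := by ring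
    rw [heq]
    refine le_trans (na _ _) (max_le hSsub ?_)
    calc ‖(F.q : K) * t₂ ^ (F.q - 1)‖ = ‖(F.q : K)‖ * ‖t₂ ^ (F.q - 1)‖ := norm_mul _ _
      _ ≤ (F.q : ℝ)⁻¹ * 1 := by
          refine mul_le_mul F.norm_q_le ?_ (norm_nonneg _) hqinv0
          rw [norm_pow]; exact pow_le_one₀ (norm_nonneg _) h₂
      _ = (F.q : ℝ)⁻¹ := mul_one _
  have hS1 : ‖S - 1‖ = 1 := by
    have : ‖S‖ < ‖(1 : K)‖ := by rw [norm_one]; exact lt_of_le_of_lt hSnorm hqinv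
    simpa using na_norm_sub_eq' na this
  rw [hfact, norm_mul, norm_mul, hS1, one_mul, hb]
end
end

section
/- Let T(x,y) = (ay + b(x^q - x), x) with 0 < |a| < 1 and |b| = q. Then T maps R² into R², but T restricted to R² is not surjective onto R²; in particular (1,0) ∈ R² is not in T(R²). -/
open scoped Classical
open MeasureTheory Filter

noncomputable section

variable {K : Type*} [NormedField K]

lemma NAField.pow_q_sub_self (F : NAField K) (x : K) (hx : ‖x‖ ≤ 1) :
    ‖x ^ F.q - x‖ ≤ (F.q : ℝ)⁻¹ := by
  have hq1 : (1 : ℝ) < (F.q : ℝ) := by exact_mod_cast F.one_lt_q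
  have hq0 : (0 : ℝ) < (F.q : ℝ) := lt_trans one_pos hq1
  -- the ring of integers
  set R : Subring K :=
    { carrier := {x : K | ‖x‖ ≤ 1}
      one_mem' := by simp
      mul_mem' := by
        intro a b ha hb
        calc ‖a * b‖ = ‖a‖ * ‖b‖ := norm_mul a b
          _ ≤ 1 * 1 := mul_le_mul ha hb (norm_nonneg b) zero_le_one
          _ = 1 := one_mul 1
      zero_mem' := by simp
      add_mem' := by
        intro a b ha hb
        exact le_trans (F.na a b) (max_le ha hb)
      neg_mem' := by
        intro a ha
        simpa using ha } with hR
  -- the maximal ideal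
  set m : Ideal R :=
    { carrier := {x : R | ‖(x : K)‖ ≤ (F.q : ℝ)⁻¹}
      zero_mem' := by
        simp [inv_nonneg.mpr (le_of_lt hq0)]
      add_mem' := by
        intro a b ha hb
        exact le_trans (F.na a b) (max_le ha hb)
      smul_mem' := by
        intro c v hv
        have hc : ‖(c : K)‖ ≤ 1 := c.2
        show ‖((c * v : R) : K)‖ ≤ (F.q : ℝ)⁻¹
        push_cast
        calc ‖(c : K) * (v : K)‖ = ‖(c : K)‖ * ‖(v : K)‖ := norm_mul _ _
          _ ≤ 1 * (F.q : ℝ)⁻¹ := mul_le_mul hc hv (norm_nonneg _) zero_le_one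
          _ = (F.q : ℝ)⁻¹ := one_mul _ } with hm
  have mem_m : ∀ v : R, v ∈ m ↔ ‖(v : K)‖ ≤ (F.q : ℝ)⁻¹ := fun v => Iff.rfl
  -- units of R
  have hunit : ∀ v : R, v ∉ m → IsUnit v := by
    intro v hv
    rw [mem_m] at hv
    push_neg at hv
    have hv0 : (v : K) ≠ 0 := by
      intro h
      rw [h, norm_zero] at hv
      exact absurd (inv_nonneg.mpr (le_of_lt hq0)) (not_le.mpr hv)
    obtain ⟨n, hn⟩ := F.valGroup (v : K) hv0
    have hn0 : n = 0 := by
      have h1 : (F.q : ℝ) ^ n ≤ (F.q : ℝ) ^ (0 : ℤ) := by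
        rw [zpow_zero, ← hn]; exact v.2
    
      have h2 : (F.q : ℝ) ^ (-1 : ℤ) < (F.q : ℝ) ^ n := by
        rw [zpow_neg_one, ← hn]; exact hv
      have hle : n ≤ 0 := le_of_not_gt fun h =>
        absurd h1 (not_le.mpr ((zpow_lt_zpow_right₀ hq1) h))
      have hgt : (-1 : ℤ) < n := lt_of_not_ge fun h =>
        absurd h2 (not_lt.mpr (zpow_le_zpow_right₀ (le_of_lt hq1) h))
      omega
    have hnorm1 : ‖(v : K)‖ = 1 := by rw [hn, hn0, zpow_zero]
    have hinv : ‖(v : K)⁻¹‖ ≤ 1 := by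
      rw [norm_inv, hnorm1]; norm_num
    refine isUnit_iff_exists_inv.mpr ⟨⟨(v : K)⁻¹, hinv⟩, ?_⟩
    ext
    push_cast
    exact mul_inv_cancel₀ hv0
  haveI hmax : m.IsMaximal := by
    rw [Ideal.isMaximal_iff]
    constructor
    · rw [mem_m]
      push_cast
      rw [norm_one]
      intro h
      have := (inv_lt_one₀ hq0).mpr hq1
      linarith
    · intro J v _ hvm hvJ
      obtain ⟨u, hu⟩ := hunit v hvm
      obtain ⟨w, hw1, hw2⟩ := isUnit_iff_exists.mp (hunit v hvm)
      have : (1 : R) = w * v := by rw [mul_comm]; exact hw1.symm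
      rw [this]
      exact J.mul_mem_left w hvJ
  letI : Field (R ⧸ m) := Ideal.Quotient.field m
  -- bijection with reps
  set g : F.reps → R ⧸ m := fun s =>
    Ideal.Quotient.mk m ⟨(s : K), F.norm_reps s s.2⟩ with hg
  have hginj : Function.Injective g := by
    intro s t hst
    have : (⟨(s : K), F.norm_reps s s.2⟩ - ⟨(t : K), F.norm_reps t t.2⟩ : R) ∈ m :=
      (Ideal.Quotient.eq).mp hst
    rw [mem_m] at this
    by_contra hne
    have hne' : (s : K) ≠ (t : K) := fun h => hne (Subtype.ext h)
    have h2 := F.reps_sep s s.2 t t.2 hne'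
    have hcoe : ((⟨(s : K), F.norm_reps s s.2⟩ - ⟨(t : K), F.norm_reps t t.2⟩ : R) : K) = (s : K) - (t : K) := rfl
    rw [hcoe] at this
    linarith
  have hgsurj : Function.Surjective g := by
    intro y
    obtain ⟨z, hz⟩ := Ideal.Quotient.mk_surjective y
    obtain ⟨s, hs, hxs⟩ := F.reps_cover (z : K) z.2
    refine ⟨⟨s, hs⟩, ?_⟩
    rw [hg, ← hz]
    apply (Ideal.Quotient.eq).mpr
    rw [mem_m]
    have hcoe : ((⟨s, F.norm_reps s hs⟩ - z : R) : K) = s - (z : K) := rfl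
    show ‖((⟨s, F.norm_reps s hs⟩ - z : R) : K)‖ ≤ (F.q : ℝ)⁻¹
    rw [hcoe, ← norm_neg]
    simpa using hxs
  letI : Fintype (R ⧸ m) := Fintype.ofBijective g ⟨hginj, hgsurj⟩
  have hcard : Fintype.card (R ⧸ m) = F.q := by
    rw [← Fintype.card_of_bijective ⟨hginj, hgsurj⟩, Fintype.card_coe, F.card_reps]
  -- finite field argument
  set xR : R := ⟨x, hx⟩ with hxR
  have hpow : (Ideal.Quotient.mk m xR) ^ F.q = Ideal.Quotient.mk m xR := by
    rw [← hcard]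
    exact FiniteField.pow_card _
  have : xR ^ F.q - xR ∈ m := by
    apply (Ideal.Quotient.eq_zero_iff_mem).mp
    rw [RingHom.map_sub, RingHom.map_pow, hpow, sub_self]
  rw [mem_m] at this
  have hcoe : ((xR ^ F.q - xR : R) : K) = x ^ F.q - x := by push_cast; rfl
  rwa [hcoe] at this

theorem stmt6 (F : NAField K) (a b : K) (ha0 : a ≠ 0) (ha : ‖a‖ < 1)
    (hb : ‖b‖ = (F.q : ℝ)) :
    Set.MapsTo (F.Tmap a b) (unitPoly K) (unitPoly K) ∧
    ((1 : K), (0 : K)) ∉ F.Tmap a b '' unitPoly K := by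
  have hq0 : (0 : ℝ) < (F.q : ℝ) := by
    exact_mod_cast lt_trans one_pos F.one_lt_q
  constructor
  · rintro ⟨x, y⟩ ⟨hx, hy⟩
    refine ⟨?_, hx⟩
    show ‖a * y + b * (x ^ F.q - x)‖ ≤ 1
    refine le_trans (F.na _ _) (max_le ?_ ?_)
    · simp only [norm_mul]
      calc ‖a‖ * ‖y‖ ≤ 1 * 1 :=
        mul_le_mul (le_of_lt ha) hy (norm_nonneg y) zero_le_one
        _ = 1 := one_mul 1
    · simp only [norm_mul]
      rw [hb]
      calc (F.q : ℝ) * ‖x ^ F.q - x‖ ≤ (F.q : ℝ) * (F.q : ℝ)⁻¹ :=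
        mul_le_mul_of_nonneg_left (F.pow_q_sub_self x hx) (le_of_lt hq0)
        _ = 1 := mul_inv_cancel₀ (ne_of_gt hq0)
  · rintro ⟨⟨x, y⟩, ⟨hx, hy⟩, heq⟩
    have h2 : x = 0 := by
      have := congrArg Prod.snd heq
      simpa [NAField.Tmap] using this
    have h1 : a * y + b * (x ^ F.q - x) = 1 := by
      have := congrArg Prod.fst heq
      simpa [NAField.Tmap] using this
    rw [h2] at h1
    have hq1 : 1 ≤ F.q := le_of_lt F.one_lt_q
    rw [zero_pow (by omega), sub_zero, mul_zero, add_zero] at h1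
    have : ‖a * y‖ < 1 := by
      rw [norm_mul]
      calc ‖a‖ * ‖y‖ ≤ ‖a‖ * 1 :=
        mul_le_mul_of_nonneg_left hy (norm_nonneg a)
        _ = ‖a‖ := mul_one _
        _ < 1 := ha
    rw [h1, norm_one] at this
    exact lt_irrefl 1 this
end
end

section
/- Let f : R → R be (1/q)-Lipschitz and fix t ∈ R and a coset representative s of the residue field. Then the map F(x) = x + (at + φ(x) - f(x))/b, where φ(x) = b(x^q - x), maps the disc D_{1/q}(s) into itself, is (1/q)-Lipschitz on that disc, and hence has a unique fixed point x* ∈ D_{1/q}(s); this fixed point satisfies at + φ(x*) - f(x*) = 0. -/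
open scoped Classical
open MeasureTheory Filter

noncomputable section

variable {K : Type*} [NormedField K]

set_option synthInstance.maxHeartbeats 400000
set_option maxHeartbeats 1000000

namespace NAField

variable (F : NAField K)

lemma one_lt_qR : (1:ℝ) < F.q := by exact_mod_cast F.one_lt_q

lemma qi_pos : (0:ℝ) < ((F.q:ℝ))⁻¹ := by have := F.one_lt_qR; positivity

lemma qi_lt_one : ((F.q:ℝ))⁻¹ < 1 := by
  rw [inv_lt_one_iff₀]; right; exact F.one_lt_qR

/-- ring of integers -/
def O : Subring K where
  carrier := {x | ‖x‖ ≤ 1}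
  one_mem' := by simp
  mul_mem' := by
    intro a b ha hb
    calc ‖a * b‖ = ‖a‖ * ‖b‖ := norm_mul a b
    _ ≤ 1 * 1 := by exact mul_le_mul ha hb (norm_nonneg _) zero_le_one
    _ = 1 := one_mul 1
  zero_mem' := by simp
  add_mem' := by
    intro a b ha hb
    exact le_trans (F.na a b) (max_le ha hb)
  neg_mem' := by intro a ha; simpa using ha

def mI : Ideal F.O where
  carrier := {x | ‖(x:K)‖ ≤ ((F.q:ℝ))⁻¹}
  zero_mem' := by simp
  add_mem' := by
    intro a b ha hb
    exact le_trans (F.na a b) (max_le ha hb)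
  smul_mem' := by
    intro c x hx
    show ‖((c*x : F.O) : K)‖ ≤ _
    push_cast
    rw [norm_mul]
    calc ‖(c:K)‖ * ‖(x:K)‖ ≤ 1 * ((F.q:ℝ))⁻¹ :=
      mul_le_mul c.2 hx (norm_nonneg _) zero_le_one
    _ = _ := one_mul _

lemma norm_eq_one_of_not_mem {x : F.O} (h1 : x ∉ F.mI) : ‖(x:K)‖ = 1 := by
  have hx0 : (x:K) ≠ 0 := by
    rintro h
    exact h1 (by simp [mI, h])
  obtain ⟨n, hn⟩ := F.valGroup x hx0
  have hle : ‖(x:K)‖ ≤ 1 := x.2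
  have hgt : ((F.q:ℝ))⁻¹ < ‖(x:K)‖ := lt_of_not_ge h1
  rcases lt_trichotomy n 0 with h | h | h
  · exfalso
    have : n ≤ -1 := by omega
    have : ((F.q:ℝ)) ^ n ≤ ((F.q:ℝ)) ^ (-1 : ℤ) :=
      zpow_le_zpow_right₀ (le_of_lt F.one_lt_qR) this
    rw [zpow_neg_one] at this
    rw [hn] at hgt
    linarith
  · rw [hn, h, zpow_zero]
  · exfalso
    have : ((F.q:ℝ)) ^ (1:ℤ) ≤ ((F.q:ℝ)) ^ n := zpow_le_zpow_right₀ (le_of_lt F.one_lt_qR) h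
    rw [zpow_one] at this
    rw [hn] at hle
    have := F.one_lt_qR
    linarith

instance mI_isMaximal : F.mI.IsMaximal := by
  rw [Ideal.isMaximal_iff]
  constructor
  · show ¬ (‖((1 : F.O) : K)‖ ≤ _)
    push_cast
    rw [norm_one, not_le]
    exact F.qi_lt_one
  · intro J x hJ hx hxJ
    have hx1 : ‖(x:K)‖ = 1 := F.norm_eq_one_of_not_mem hx
    have hxne : (x:K) ≠ 0 := by intro h; rw [h, norm_zero] at hx1; norm_num at hx1
    have hinv : ‖((x:K)⁻¹)‖ ≤ 1 := by rw [norm_inv, hx1]; norm_num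
    have : (1 : F.O) = x * ⟨(x:K)⁻¹, hinv⟩ := by
      ext; push_cast; rw [mul_inv_cancel₀ hxne]
    rw [this]
    exact J.mul_mem_right _ hxJ

abbrev Res := F.O ⧸ F.mI

noncomputable instance : Field F.Res := Ideal.Quotient.field F.mI

def repMap (s : F.reps) : F.Res :=
  Ideal.Quotient.mk F.mI ⟨(s:K), F.norm_reps s s.2⟩

lemma repMap_bij : Function.Bijective F.repMap := by
  constructor
  · rintro ⟨s, hs⟩ ⟨t, ht⟩ h
    rw [repMap, repMap, Ideal.Quotient.eq] at h
    have h' : ‖s - t‖ ≤ ((F.q:ℝ))⁻¹ := h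
    by_contra hne
    have : s ≠ t := fun hc => hne (by simpa using hc)
    exact absurd h' (not_le.2 (F.reps_sep s hs t ht this))
  · intro y
    obtain ⟨x, hx⟩ := Ideal.Quotient.mk_surjective y
    obtain ⟨s, hs, hxs⟩ := F.reps_cover x x.2
    refine ⟨⟨s, hs⟩, ?_⟩
    rw [← hx, repMap, Ideal.Quotient.eq]
    show ‖(s:K) - x‖ ≤ _
    rw [← norm_neg]; simpa using hxs

noncomputable instance : Fintype F.Res :=
  Fintype.ofSurjective F.repMap F.repMap_bij.2

lemma card_Res : Fintype.card F.Res = F.q := by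
  rw [← Fintype.card_of_bijective F.repMap_bij, Fintype.card_coe, F.card_reps]

lemma frobenius_mem (x : F.O) : x ^ F.q - x ∈ F.mI := by
  rw [← Ideal.Quotient.eq, map_pow, ← F.card_Res]
  exact FiniteField.pow_card _

/-- Fermat: ‖x^q - x‖ ≤ 1/q for x in R. -/
lemma frob (x : K) (hx : ‖x‖ ≤ 1) : ‖x ^ F.q - x‖ ≤ ((F.q:ℝ))⁻¹ := by
  have := F.frobenius_mem ⟨x, hx⟩
  have h : ‖(((⟨x, hx⟩ : F.O) ^ F.q - ⟨x, hx⟩ : F.O) : K)‖ ≤ ((F.q:ℝ))⁻¹ := this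
  push_cast at h
  exact h

/-- Lipschitz of x ↦ x^q on a residue disc. -/
lemma pow_lip {x y s : K} (hsn : ‖s‖ ≤ 1) (hx : ‖x - s‖ ≤ ((F.q:ℝ))⁻¹)
    (hy : ‖y - s‖ ≤ ((F.q:ℝ))⁻¹) :
    ‖x ^ F.q - y ^ F.q‖ ≤ ((F.q:ℝ))⁻¹ * ‖x - y‖ := by
  have hqi1 : ((F.q:ℝ))⁻¹ ≤ 1 := le_of_lt F.qi_lt_one
  have hxm : ‖x‖ ≤ 1 := by
    have := F.na (x - s) s
    simp only [sub_add_cancel] at this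
    exact le_trans this (max_le (le_trans hx hqi1) hsn)
  have hym : ‖y‖ ≤ 1 := by
    have := F.na (y - s) s
    simp only [sub_add_cancel] at this
    exact le_trans this (max_le (le_trans hy hqi1) hsn)
  set X : F.O := ⟨x, hxm⟩
  set Y : F.O := ⟨y, hym⟩
  set S : F.O := ⟨s, hsn⟩
  have hXS : Ideal.Quotient.mk F.mI X = Ideal.Quotient.mk F.mI S := by
    rw [Ideal.Quotient.eq]; exact hx
  have hYS : Ideal.Quotient.mk F.mI Y = Ideal.Quotient.mk F.mI S := by
    rw [Ideal.Quotient.eq]; exact hy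
  set G : F.O := ∑ i ∈ Finset.range F.q, X ^ i * Y ^ (F.q - 1 - i)
  have hG : G ∈ F.mI := by
    rw [← Ideal.Quotient.eq_zero_iff_mem, map_sum]
    have : ∀ i ∈ Finset.range F.q,
        Ideal.Quotient.mk F.mI (X ^ i * Y ^ (F.q - 1 - i))
          = (Ideal.Quotient.mk F.mI S) ^ (F.q - 1) := by
      intro i hi
      rw [Finset.mem_range] at hi
      rw [map_mul, map_pow, map_pow, hXS, hYS, ← pow_add]
      congr 1
      omega
    rw [Finset.sum_congr rfl this, Finset.sum_const, Finset.card_range, nsmul_eq_mul]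
    have : ((F.q : F.Res)) = 0 := by
      rw [← F.card_Res]; exact Nat.cast_card_eq_zero _
    rw [this, zero_mul]
  have hGn : ‖(G : K)‖ ≤ ((F.q:ℝ))⁻¹ := hG
  have key : x ^ F.q - y ^ F.q = (G : K) * (x - y) := by
    rw [← geom_sum₂_mul x y F.q]
    congr 1
    push_cast [G]
    rfl
  rw [key, norm_mul]
  exact mul_le_mul_of_nonneg_right hGn (norm_nonneg _)


lemma mem_disc_norm (F : NAField K) {x s : K} (hsn : ‖s‖ ≤ 1)
    (hx : ‖x - s‖ ≤ ((F.q:ℝ))⁻¹) : ‖x‖ ≤ 1 := by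
  have := F.na (x - s) s
  simp only [sub_add_cancel] at this
  exact le_trans this (max_le (le_trans hx (le_of_lt F.qi_lt_one)) hsn)

end NAField

theorem stmt9 (F : NAField K) (a b : K) (ha0 : a ≠ 0) (ha : ‖a‖ < 1)
    (hb : ‖b‖ = (F.q : ℝ)) (f : K → K) (hf : F.IsLip f)
    (t : K) (ht : ‖t‖ ≤ 1) (s : K) (hs : s ∈ F.reps) :
    (∀ x : K, ‖x - s‖ ≤ ((F.q : ℝ))⁻¹ →
        ‖(x + (a * t + b * (x ^ F.q - x) - f x) / b) - s‖ ≤ ((F.q : ℝ))⁻¹) ∧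
    (∀ x₁ x₂ : K, ‖x₁ - s‖ ≤ ((F.q : ℝ))⁻¹ → ‖x₂ - s‖ ≤ ((F.q : ℝ))⁻¹ →
        ‖(x₁ + (a * t + b * (x₁ ^ F.q - x₁) - f x₁) / b)
            - (x₂ + (a * t + b * (x₂ ^ F.q - x₂) - f x₂) / b)‖
          ≤ ((F.q : ℝ))⁻¹ * ‖x₁ - x₂‖) ∧
    (∃! x : K, ‖x - s‖ ≤ ((F.q : ℝ))⁻¹ ∧
        x + (a * t + b * (x ^ F.q - x) - f x) / b = x) ∧
    (∀ x : K, ‖x - s‖ ≤ ((F.q : ℝ))⁻¹ →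
        x + (a * t + b * (x ^ F.q - x) - f x) / b = x →
        a * t + b * (x ^ F.q - x) - f x = 0) := by
  classical
  set qi : ℝ := ((F.q:ℝ))⁻¹ with hqidef
  have hqi0 : 0 < qi := F.qi_pos
  have hqi1 : qi < 1 := F.qi_lt_one
  have hsn : ‖s‖ ≤ 1 := F.norm_reps s hs
  have hb0 : b ≠ 0 := by
    intro h
    rw [h, norm_zero] at hb
    have := F.one_lt_qR
    linarith
  have hbinv : ‖b‖⁻¹ = qi := by rw [hb]
  have ha_le : ‖a‖ ≤ qi := by
    obtain ⟨n, hn⟩ := F.valGroup a ha0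
    have h1q := F.one_lt_qR
    have hneg : n ≤ -1 := by
      by_contra hcon
      have h0 : (0:ℤ) ≤ n := by omega
      have : ((F.q:ℝ)) ^ (0:ℤ) ≤ ((F.q:ℝ)) ^ n := zpow_le_zpow_right₀ (le_of_lt h1q) h0
      rw [zpow_zero] at this
      rw [hn] at ha
      linarith
    have : ((F.q:ℝ)) ^ n ≤ ((F.q:ℝ)) ^ (-1:ℤ) := zpow_le_zpow_right₀ (le_of_lt h1q) hneg
    rw [zpow_neg_one] at this
    rw [hn]
    exact this
  -- Part 1 : invariance
  have part1 : ∀ x : K, ‖x - s‖ ≤ qi →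
      ‖(x + (a * t + b * (x ^ F.q - x) - f x) / b) - s‖ ≤ qi := by
    intro x hx
    have hx1 : ‖x‖ ≤ 1 := F.mem_disc_norm hsn hx
    have hre : x + (a * t + b * (x ^ F.q - x) - f x) / b - s
        = ((x - s) + (x ^ F.q - x)) + (a * t - f x) / b := by
      field_simp
      ring
    rw [hre]
    refine le_trans (F.na _ _) (max_le (le_trans (F.na _ _) (max_le hx (F.frob x hx1))) ?_)
    have hnum : ‖a * t - f x‖ ≤ 1 := by
      have h1 : ‖a * t‖ ≤ 1 := by
        rw [norm_mul]
        calc ‖a‖ * ‖t‖ ≤ 1 * 1 :=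
          mul_le_mul (le_of_lt ha) ht (norm_nonneg _) zero_le_one
        _ = 1 := one_mul 1
      have h2 : ‖f x‖ ≤ 1 := hf.1 x hx1
      have hthis : ‖a * t + (-(f x))‖ ≤ max ‖a * t‖ ‖-(f x)‖ := F.na (a * t) (-(f x))
      rw [← sub_eq_add_neg, norm_neg] at hthis
      exact le_trans hthis (max_le h1 h2)
    show ‖(a * t - f x) / b‖ ≤ qi
    rw [norm_div, hb, hqidef, ← one_div]
    have hq0 : (0:ℝ) < (F.q:ℝ) := by have := F.one_lt_qR; linarith
    gcongr
  -- Part 2 : Lipschitz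
  have part2 : ∀ x₁ x₂ : K, ‖x₁ - s‖ ≤ qi → ‖x₂ - s‖ ≤ qi →
      ‖(x₁ + (a * t + b * (x₁ ^ F.q - x₁) - f x₁) / b)
          - (x₂ + (a * t + b * (x₂ ^ F.q - x₂) - f x₂) / b)‖ ≤ qi * ‖x₁ - x₂‖ := by
    intro x₁ x₂ h1 h2
    have hx1 : ‖x₁‖ ≤ 1 := F.mem_disc_norm hsn h1
    have hx2 : ‖x₂‖ ≤ 1 := F.mem_disc_norm hsn h2
    have hre : (x₁ + (a * t + b * (x₁ ^ F.q - x₁) - f x₁) / b)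
        - (x₂ + (a * t + b * (x₂ ^ F.q - x₂) - f x₂) / b)
        = (x₁ ^ F.q - x₂ ^ F.q) + (f x₂ - f x₁) / b := by
      field_simp
      ring
    rw [hre]
    refine le_trans (F.na _ _) (max_le (F.pow_lip hsn h1 h2) ?_)
    show ‖(f x₂ - f x₁) / b‖ ≤ qi * ‖x₁ - x₂‖
    rw [norm_div, hb, div_eq_mul_inv, ← hqidef]
    have hlip : ‖f x₂ - f x₁‖ ≤ qi * ‖x₁ - x₂‖ := by
      have := hf.2 x₂ x₁ hx2 hx1
      rw [norm_sub_rev x₂ x₁] at this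
      exact le_trans this (by rw [hqidef])
    calc ‖f x₂ - f x₁‖ * qi ≤ (qi * ‖x₁ - x₂‖) * qi :=
          mul_le_mul_of_nonneg_right hlip (le_of_lt hqi0)
    _ ≤ (1 * ‖x₁ - x₂‖) * qi := by
          have : qi * ‖x₁ - x₂‖ ≤ 1 * ‖x₁ - x₂‖ :=
            mul_le_mul_of_nonneg_right (le_of_lt hqi1) (norm_nonneg _)
          exact mul_le_mul_of_nonneg_right this (le_of_lt hqi0)
    _ = qi * ‖x₁ - x₂‖ := by ring
  -- Part 4 helper
  have part4 : ∀ x : K, ‖x - s‖ ≤ qi →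
      x + (a * t + b * (x ^ F.q - x) - f x) / b = x →
      a * t + b * (x ^ F.q - x) - f x = 0 := by
    intro x _ hfix
    have h0 : (a * t + b * (x ^ F.q - x) - f x) / b = 0 :=
      add_eq_left.mp hfix
    rcases div_eq_zero_iff.mp h0 with h | h
    · exact h
    · exact absurd h hb0
  -- Part 3 : unique fixed point
  have part3 : ∃! x : K, ‖x - s‖ ≤ qi ∧
      x + (a * t + b * (x ^ F.q - x) - f x) / b = x := by
    haveI := F.complete
    set D : Set K := {x : K | ‖x - s‖ ≤ qi} with hD
    have hcl : IsClosed D := by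
      have : D = Metric.closedBall s qi := by
        ext x; simp [hD, Metric.mem_closedBall, dist_eq_norm]
      rw [this]
      exact Metric.isClosed_closedBall
    haveI : CompleteSpace D := hcl.completeSpace_coe
    haveI : Nonempty D := ⟨⟨s, by simp [hD, le_of_lt hqi0]⟩⟩
    set g : D → D := fun x =>
      ⟨(x:K) + (a * t + b * ((x:K) ^ F.q - (x:K)) - f x) / b, part1 x x.2⟩ with hg
    have hcontr : ContractingWith ⟨qi, le_of_lt hqi0⟩ g := by
      constructor
      · exact NNReal.coe_lt_one.mp hqi1
      · apply LipschitzWith.of_dist_le_mul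
        intro x y
        rw [Subtype.dist_eq (g x) (g y), Subtype.dist_eq x y, dist_eq_norm, dist_eq_norm]
        exact part2 x y x.2 y.2
    set x0 : D := hcontr.fixedPoint g with hx0
    have hfix : g x0 = x0 := hcontr.fixedPoint_isFixedPt
    have hfixK : (x0:K) + (a * t + b * ((x0:K) ^ F.q - (x0:K)) - f x0) / b = (x0:K) := by
      exact congrArg Subtype.val hfix
    refine ⟨(x0:K), ⟨x0.2, hfixK⟩, ?_⟩
    intro y ⟨hy1, hy2⟩
    have hcal := part2 y (x0:K) hy1 x0.2
    rw [hy2, hfixK] at hcal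
    have hn0 : ‖y - (x0:K)‖ = 0 := by nlinarith [norm_nonneg (y - (x0:K))]
    have := norm_eq_zero.mp hn0
    exact sub_eq_zero.mp this
  exact ⟨part1, part2, part3, part4⟩
end
end

section
/- Let f : R → R be (1/q)-Lipschitz and 0 < δ ≤ 1. Then T⁻¹(V_δ(f)) ∩ R² is the disjoint union over residue classes s ∈ F of sets V_{δ/q}(f^s), where each f^s : R → R is a (1/q)-Lipschitz function taking values in the disc D_{1/q}(s). In other words, the preimage under T of a vertical δ-tube meets R² in q vertical tubes of radius δ/q, one in each vertical strip D_{1/q}(s) × R. -/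
open scoped Classical
open MeasureTheory Filter

noncomputable section

variable {K : Type*} [NormedField K]

namespace NAField

lemma na_add_le' (F : NAField K) (x y : K) : ‖x + y‖ ≤ max ‖x‖ ‖y‖ := F.na x y

lemma na_sub_le' (F : NAField K) (x y : K) : ‖x - y‖ ≤ max ‖x‖ ‖y‖ := by
  rw [sub_eq_add_neg]
  simpa using F.na x (-y)

lemma na_add_eq' (F : NAField K) {x y : K} (h : ‖y‖ < ‖x‖) : ‖x + y‖ = ‖x‖ := by
  refine le_antisymm ((F.na x y).trans (by simp [h.le])) ?_
  have h2 : ‖x‖ ≤ max ‖x + y‖ ‖y‖ := by simpa using F.na (x + y) (-y)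
  rcases max_cases ‖x + y‖ ‖y‖ with ⟨he, _⟩ | ⟨he, _⟩
  · rw [he] at h2; exact h2
  · rw [he] at h2; exact absurd h2 (not_le.2 h)

lemma na_sum_le' (F : NAField K) {ι : Type*} (S : Finset ι) (g : ι → K) {C : ℝ} (hC : 0 ≤ C)
    (h : ∀ i ∈ S, ‖g i‖ ≤ C) : ‖∑ i ∈ S, g i‖ ≤ C := by
  classical
  induction S using Finset.cons_induction with
  | empty => simpa using hC
  | cons a S ha ih =>
      rw [Finset.sum_cons]
      refine (F.na _ _).trans (max_le (h a (Finset.mem_cons_self a S)) ?_)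
      exact ih fun i hi => h i (Finset.mem_cons_of_mem hi)

lemma two_le_q (F : NAField K) : 2 ≤ F.q := F.one_lt_q

lemma oneltQ (F : NAField K) : (1 : ℝ) < (F.q : ℝ) := by exact_mod_cast F.one_lt_q

lemma Qpos (F : NAField K) : (0 : ℝ) < (F.q : ℝ) := lt_trans one_pos F.oneltQ

lemma Qinv_pos (F : NAField K) : (0 : ℝ) < ((F.q : ℝ))⁻¹ := inv_pos.2 F.Qpos

lemma Qinv_lt_one (F : NAField K) : ((F.q : ℝ))⁻¹ < 1 := by
  rw [inv_lt_one_iff₀]; right; exact F.oneltQ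

lemma Qinv_le_one (F : NAField K) : ((F.q : ℝ))⁻¹ ≤ 1 := F.Qinv_lt_one.le

noncomputable def rep (F : NAField K) (x : K) : K :=
  if h : ‖x‖ ≤ 1 then (F.reps_cover x h).choose else 0

lemma rep_mem (F : NAField K) {x : K} (h : ‖x‖ ≤ 1) : F.rep x ∈ F.reps := by
  rw [rep, dif_pos h]; exact (F.reps_cover x h).choose_spec.1

lemma rep_dist (F : NAField K) {x : K} (h : ‖x‖ ≤ 1) : ‖x - F.rep x‖ ≤ ((F.q : ℝ))⁻¹ := by
  rw [rep, dif_pos h]; exact (F.reps_cover x h).choose_spec.2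

lemma close_reps_eq (F : NAField K) {s s' : K} (hs : s ∈ F.reps) (hs' : s' ∈ F.reps)
    (hd : ‖s - s'‖ ≤ ((F.q : ℝ))⁻¹) : s = s' := by
  by_contra hne
  exact absurd hd (not_le.2 (F.reps_sep s hs s' hs' hne))

lemma rep_unique (F : NAField K) {x s : K} (h : ‖x‖ ≤ 1) (hs : s ∈ F.reps)
    (hd : ‖x - s‖ ≤ ((F.q : ℝ))⁻¹) : s = F.rep x := by
  refine F.close_reps_eq hs (F.rep_mem h) ?_
  have : s - F.rep x = (x - F.rep x) - (x - s) := by ring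
  rw [this]
  exact (F.na_sub_le' _ _).trans (max_le (F.rep_dist h) hd)

lemma norm_q_le_s10 (F : NAField K) : ‖((F.q : ℕ) : K)‖ ≤ ((F.q : ℝ))⁻¹ := by
  classical
  set g : K → K := fun s => F.rep (1 + s) with hg
  have h1 : ∀ s ∈ F.reps, ‖1 + s‖ ≤ 1 := fun s hs =>
    (F.na 1 s).trans (by simp [F.norm_reps s hs])
  have hinj : Set.InjOn g F.reps := by
    intro s hs s' hs' he
    refine F.close_reps_eq hs hs' ?_
    have he' : F.rep (1 + s) = F.rep (1 + s') := he
    have heq : s - s' = ((1 + s) - F.rep (1 + s)) - ((1 + s') - F.rep (1 + s')) := by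
      rw [he']; ring
    rw [heq]
    exact (F.na_sub_le' _ _).trans
      (max_le (F.rep_dist (h1 s hs)) (F.rep_dist (h1 s' hs')))
  have himg : Finset.image g F.reps = F.reps := by
    apply Finset.eq_of_subset_of_card_le
    · intro u hu
      simp only [Finset.mem_image] at hu
      obtain ⟨s, hs, rfl⟩ := hu
      exact F.rep_mem (h1 s hs)
    · rw [Finset.card_image_of_injOn hinj]
  have hsum : ∑ s ∈ F.reps, g s = ∑ s ∈ F.reps, s := by
    conv_rhs => rw [← himg]
    rw [Finset.sum_image (fun a ha b hb => hinj ha hb)]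
  have key : ∑ s ∈ F.reps, ((1 + s) - g s) = ((F.q : ℕ) : K) := by
    rw [Finset.sum_sub_distrib, hsum, Finset.sum_add_distrib]
    simp [F.card_reps]
  rw [← key]
  exact F.na_sum_le' _ _ F.Qinv_pos.le fun s hs => F.rep_dist (h1 s hs)

lemma norm_dich (F : NAField K) {x : K} (h : ‖x‖ ≤ 1) : ‖x‖ = 1 ∨ ‖x‖ ≤ ((F.q : ℝ))⁻¹ := by
  rcases eq_or_ne x 0 with rfl | hx
  · right; simp [F.Qinv_pos.le]
  obtain ⟨n, hn⟩ := F.valGroup x hx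
  rcases lt_trichotomy n 0 with hlt | rfl | hgt
  · right
    rw [hn]
    calc ((F.q : ℝ)) ^ n ≤ ((F.q : ℝ)) ^ (-1 : ℤ) := by
          apply zpow_le_zpow_right₀ F.oneltQ.le (by omega)
      _ = ((F.q : ℝ))⁻¹ := by simp
  · left; simpa using hn
  · exfalso
    have : ((F.q : ℝ)) ^ (1 : ℤ) ≤ ((F.q : ℝ)) ^ n :=
      zpow_le_zpow_right₀ F.oneltQ.le (by omega)
    simp only [zpow_one] at this
    rw [hn] at h
    linarith [F.oneltQ]

end NAField
namespace NAField

lemma norm_natCast_le_one (F : NAField K) (n : ℕ) : ‖(n : K)‖ ≤ 1 := by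
  induction n with
  | zero => simp
  | succ n ih =>
      push_cast
      exact (F.na _ _).trans (max_le ih (by simp))

lemma prod_cong (F : NAField K) {ι : Type*} (S : Finset ι) (u v : ι → K)
    (hu : ∀ i ∈ S, ‖u i‖ ≤ 1) (hv : ∀ i ∈ S, ‖v i‖ ≤ 1)
    (hd : ∀ i ∈ S, ‖u i - v i‖ ≤ ((F.q : ℝ))⁻¹) :
    ‖∏ i ∈ S, u i - ∏ i ∈ S, v i‖ ≤ ((F.q : ℝ))⁻¹ := by
  classical
  induction S using Finset.cons_induction with
  | empty => simpa using F.Qinv_pos.le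
  | cons a S ha ih =>
      rw [Finset.prod_cons, Finset.prod_cons]
      have key : u a * ∏ i ∈ S, u i - v a * ∏ i ∈ S, v i
          = (u a - v a) * ∏ i ∈ S, u i + v a * (∏ i ∈ S, u i - ∏ i ∈ S, v i) := by
        ring
      rw [key]
      have hmem : ∀ i ∈ S, i ∈ Finset.cons a S ha := fun i hi => Finset.mem_cons_of_mem hi
      have hamem : a ∈ Finset.cons a S ha := Finset.mem_cons_self a S
      have hPu : ‖∏ i ∈ S, u i‖ ≤ 1 := by
        rw [norm_prod]
        exact Finset.prod_le_one (fun i _ => norm_nonneg _) (fun i hi => hu i (hmem i hi))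
      refine (F.na_add_le' _ _).trans (max_le ?_ ?_)
      · rw [norm_mul]
        calc ‖u a - v a‖ * ‖∏ i ∈ S, u i‖ ≤ ((F.q : ℝ))⁻¹ * 1 :=
              mul_le_mul (hd a hamem) hPu (norm_nonneg _) F.Qinv_pos.le
          _ = ((F.q : ℝ))⁻¹ := mul_one _
      · rw [norm_mul]
        calc ‖v a‖ * ‖∏ i ∈ S, u i - ∏ i ∈ S, v i‖ ≤ 1 * ((F.q : ℝ))⁻¹ :=
              mul_le_mul (hv a hamem)
                (ih (fun i hi => hu i (hmem i hi)) (fun i hi => hv i (hmem i hi))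
                  (fun i hi => hd i (hmem i hi))) (norm_nonneg _) one_pos.le
          _ = ((F.q : ℝ))⁻¹ := one_mul _

lemma pow_q_sub_self_s10 (F : NAField K) {x : K} (h : ‖x‖ ≤ 1) :
    ‖x ^ F.q - x‖ ≤ ((F.q : ℝ))⁻¹ := by
  classical
  rcases F.norm_dich h with h1 | h1
  · -- unit case
    set s₀ := F.rep 0 with hs₀
    have hs₀mem : s₀ ∈ F.reps := F.rep_mem (by simp)
    have hs₀small : ‖s₀‖ ≤ ((F.q : ℝ))⁻¹ := by
      have := F.rep_dist (x := (0 : K)) (by simp)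
      simpa [hs₀] using this
    set R1 := F.reps.erase s₀ with hR1
    have hmemR1 : ∀ s, s ∈ R1 ↔ s ∈ F.reps ∧ ((F.q : ℝ))⁻¹ < ‖s‖ := by
      intro s
      constructor
      · intro hs
        obtain ⟨hne, hmem⟩ := Finset.mem_erase.1 hs
        refine ⟨hmem, ?_⟩
        by_contra hle
        push_neg at hle
        exact hne (F.close_reps_eq hmem hs₀mem
          ((F.na_sub_le' s s₀).trans (max_le hle hs₀small)))
      · rintro ⟨hmem, hgt⟩
        refine Finset.mem_erase.2 ⟨?_, hmem⟩
        rintro rfl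
        exact absurd hs₀small (not_le.2 hgt)
    have hnorm1 : ∀ s ∈ R1, ‖s‖ = 1 := by
      intro s hs
      obtain ⟨hmem, hgt⟩ := (hmemR1 s).1 hs
      rcases F.norm_dich (F.norm_reps s hmem) with h' | h'
      · exact h'
      · exact absurd h' (not_le.2 hgt)
    have hcard : R1.card = F.q - 1 := by
      rw [hR1, Finset.card_erase_of_mem hs₀mem, F.card_reps]
    set τ : K → K := fun s => F.rep (x * s) with hτ
    have hxs1 : ∀ s ∈ R1, ‖x * s‖ = 1 := by
      intro s hs
      rw [norm_mul, h1, hnorm1 s hs, one_mul]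
    have hτmem : ∀ s ∈ R1, τ s ∈ R1 := by
      intro s hs
      have hle : ‖x * s‖ ≤ 1 := le_of_eq (hxs1 s hs)
      rw [hmemR1]
      refine ⟨F.rep_mem hle, ?_⟩
      have hts : ‖τ s‖ = 1 := by
        have hd := F.rep_dist hle
        have hdd : ‖-(x * s - τ s)‖ < ‖x * s‖ := by
          rw [norm_neg, hxs1 s hs]
          exact lt_of_le_of_lt hd F.Qinv_lt_one
        have : τ s = x * s + -(x * s - τ s) := by ring
        rw [this, F.na_add_eq' hdd, hxs1 s hs]
      rw [hts]
      exact F.Qinv_lt_one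
    have hτinj : Set.InjOn τ R1 := by
      intro s hs s' hs' he
      have he' : F.rep (x * s) = F.rep (x * s') := he
      have hdd : ‖x * s - x * s'‖ ≤ ((F.q : ℝ))⁻¹ := by
        have heq : x * s - x * s' = ((x * s) - F.rep (x * s)) - ((x * s') - F.rep (x * s')) := by
          rw [he']; ring
        rw [heq]
        exact (F.na_sub_le' _ _).trans
          (max_le (F.rep_dist (le_of_eq (hxs1 s hs))) (F.rep_dist (le_of_eq (hxs1 s' hs'))))
      have hss' : ‖s - s'‖ ≤ ((F.q : ℝ))⁻¹ := by
        rw [← mul_sub, norm_mul, h1, one_mul] at hdd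
        exact hdd
      exact F.close_reps_eq ((hmemR1 s).1 hs).1 ((hmemR1 s').1 hs').1 hss'
    have himg : Finset.image τ R1 = R1 := by
      apply Finset.eq_of_subset_of_card_le
      · intro u hu
        simp only [Finset.mem_image] at hu
        obtain ⟨s, hs, rfl⟩ := hu
        exact hτmem s hs
      · rw [Finset.card_image_of_injOn hτinj]
    have hprodeq : ∏ s ∈ R1, τ s = ∏ s ∈ R1, s := by
      conv_rhs => rw [← himg]
      rw [Finset.prod_image (fun a ha b hb => hτinj ha hb)]
    have hP1 : ‖∏ s ∈ R1, s‖ = 1 := by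
      rw [norm_prod]
      exact Finset.prod_eq_one hnorm1
    have hcong : ‖∏ s ∈ R1, (x * s) - ∏ s ∈ R1, τ s‖ ≤ ((F.q : ℝ))⁻¹ := by
      refine F.prod_cong R1 _ _ (fun s hs => le_of_eq (hxs1 s hs))
        (fun s hs => F.norm_reps _ ((hmemR1 _).1 (hτmem s hs)).1)
        (fun s hs => F.rep_dist (le_of_eq (hxs1 s hs)))
    have hxpow : ∏ s ∈ R1, (x * s) = x ^ (F.q - 1) * ∏ s ∈ R1, s := by
      rw [Finset.prod_mul_distrib, Finset.prod_const, hcard]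
    rw [hprodeq, hxpow] at hcong
    have hfac : x ^ (F.q - 1) * (∏ s ∈ R1, s) - ∏ s ∈ R1, s
        = (x ^ (F.q - 1) - 1) * ∏ s ∈ R1, s := by ring
    rw [hfac, norm_mul, hP1, mul_one] at hcong
    have hq1 : F.q - 1 + 1 = F.q := by have := F.two_le_q; omega
    have hxq : x ^ F.q - x = x * (x ^ (F.q - 1) - 1) := by
      rw [mul_sub, mul_one]
      congr 1
      rw [← pow_succ', hq1]
    rw [hxq, norm_mul, h1, one_mul]
    exact hcong
  · -- small case
    refine (F.na_sub_le' _ _).trans (max_le ?_ h1)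
    rw [norm_pow]
    calc ‖x‖ ^ F.q ≤ ‖x‖ ^ 1 :=
          pow_le_pow_of_le_one (norm_nonneg x) h (by have := F.two_le_q; omega)
      _ = ‖x‖ := pow_one _
      _ ≤ ((F.q : ℝ))⁻¹ := h1

lemma pow_q_lip (F : NAField K) {x y : K} (hx : ‖x‖ ≤ 1) (hy : ‖y‖ ≤ 1)
    (hxy : ‖x - y‖ ≤ ((F.q : ℝ))⁻¹) :
    ‖x ^ F.q - y ^ F.q‖ ≤ ((F.q : ℝ))⁻¹ * ‖x - y‖ := by
  classical
  set h := x - y with hh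
  have hhle : ‖h‖ ≤ 1 := hxy.trans F.Qinv_le_one
  have hx' : x = y + h := by rw [hh]; ring
  have hexp : x ^ F.q - y ^ F.q = ∑ k ∈ Finset.range F.q, y ^ k * h ^ (F.q - k) * (F.q.choose k : K) := by
    rw [hx', add_pow, Finset.sum_range_succ]
    simp
  rw [hexp]
  refine F.na_sum_le' _ _ (by positivity) ?_
  intro k hk
  rw [Finset.mem_range] at hk
  rw [norm_mul, norm_mul, norm_pow, mul_assoc]
  have hyk : ‖y‖ ^ k ≤ 1 := pow_le_one₀ (norm_nonneg y) hy
  have hbc : ‖h ^ (F.q - k)‖ * ‖((F.q.choose k : ℕ) : K)‖ ≤ ((F.q : ℝ))⁻¹ * ‖h‖ := by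
    rcases eq_or_lt_of_le (Nat.succ_le_of_lt hk) with hk1 | hk1
    · -- k = q - 1
      have hqk : F.q - k = 1 := by omega
      have hc : F.q.choose k = F.q := by
        have hkq : k = F.q - 1 := by omega
        rw [hkq, ← Nat.choose_symm (by omega), Nat.sub_sub_self (by have := F.two_le_q; omega),
          Nat.choose_one_right]
      rw [hqk, hc, pow_one]
      calc ‖h‖ * ‖((F.q : ℕ) : K)‖ ≤ ‖h‖ * ((F.q : ℝ))⁻¹ :=
            mul_le_mul_of_nonneg_left F.norm_q_le_s10 (norm_nonneg h)
        _ = ((F.q : ℝ))⁻¹ * ‖h‖ := mul_comm _ _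
    · -- q - k ≥ 2
      have h2 : 2 ≤ F.q - k := by omega
      have hsplit : ‖h‖ ^ (F.q - k) = ‖h‖ ^ (F.q - k - 1) * ‖h‖ := by
        rw [← pow_succ]
        congr 1
        omega
      have hsmall : ‖h‖ ^ (F.q - k - 1) ≤ ((F.q : ℝ))⁻¹ := by
        calc ‖h‖ ^ (F.q - k - 1) ≤ ‖h‖ ^ 1 :=
              pow_le_pow_of_le_one (norm_nonneg h) hhle (by omega)
          _ = ‖h‖ := pow_one _
          _ ≤ ((F.q : ℝ))⁻¹ := hxy
      rw [norm_pow, hsplit]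
      calc ‖h‖ ^ (F.q - k - 1) * ‖h‖ * ‖((F.q.choose k : ℕ) : K)‖
          ≤ ‖h‖ ^ (F.q - k - 1) * ‖h‖ * 1 :=
            mul_le_mul_of_nonneg_left (F.norm_natCast_le_one _) (by positivity)
        _ = ‖h‖ ^ (F.q - k - 1) * ‖h‖ := mul_one _
        _ ≤ ((F.q : ℝ))⁻¹ * ‖h‖ :=
            mul_le_mul_of_nonneg_right hsmall (norm_nonneg h)
  calc ‖y‖ ^ k * (‖h ^ (F.q - k)‖ * ‖((F.q.choose k : ℕ) : K)‖)
      ≤ 1 * (((F.q : ℝ))⁻¹ * ‖h‖) :=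
        mul_le_mul hyk hbc (by positivity) one_pos.le
    _ = ((F.q : ℝ))⁻¹ * ‖h‖ := one_mul _

end NAField
namespace NAField

/-- Retraction onto the closed ball of radius `q⁻¹` around `s`. -/
noncomputable def clip (F : NAField K) (s x : K) : K :=
  if ‖x - s‖ ≤ ((F.q : ℝ))⁻¹ then x else s

lemma clip_dist (F : NAField K) (s x : K) : ‖F.clip s x - s‖ ≤ ((F.q : ℝ))⁻¹ := by
  rw [clip]
  split
  · assumption
  · simp [F.Qinv_pos.le]

lemma clip_eq (F : NAField K) {s x : K} (h : ‖x - s‖ ≤ ((F.q : ℝ))⁻¹) : F.clip s x = x :=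
  if_pos h

lemma ball_norm_le (F : NAField K) {s x : K} (hs : ‖s‖ ≤ 1)
    (hx : ‖x - s‖ ≤ ((F.q : ℝ))⁻¹) : ‖x‖ ≤ 1 := by
  have hd : x = (x - s) + s := by ring
  rw [hd]
  exact (F.na _ _).trans (max_le (hx.trans F.Qinv_le_one) hs)

lemma ball_diff_le (F : NAField K) {s x y : K} (hx : ‖x - s‖ ≤ ((F.q : ℝ))⁻¹)
    (hy : ‖y - s‖ ≤ ((F.q : ℝ))⁻¹) : ‖x - y‖ ≤ ((F.q : ℝ))⁻¹ := by
  have hd : x - y = (x - s) - (y - s) := by ring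
  rw [hd]
  exact (F.na_sub_le' _ _).trans (max_le hx hy)

lemma clip_lip (F : NAField K) (s x y : K) : ‖F.clip s x - F.clip s y‖ ≤ ‖x - y‖ := by
  by_cases hx : ‖x - s‖ ≤ ((F.q : ℝ))⁻¹ <;> by_cases hy : ‖y - s‖ ≤ ((F.q : ℝ))⁻¹
  · rw [F.clip_eq hx, F.clip_eq hy]
  · rw [F.clip_eq hx, clip, if_neg hy]
    push_neg at hy
    have hxy : ‖x - y‖ = ‖y - s‖ := by
      have hd : x - y = -(y - s) + (x - s) := by ring
      rw [hd, F.na_add_eq' (by rw [norm_neg]; exact lt_of_le_of_lt hx hy), norm_neg]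
    rw [hxy]
    exact hx.trans hy.le
  · rw [F.clip_eq hy, clip, if_neg hx]
    push_neg at hx
    have hxy : ‖x - y‖ = ‖x - s‖ := by
      have hd : x - y = (x - s) + -(y - s) := by ring
      rw [hd, F.na_add_eq' (by rw [norm_neg]; exact lt_of_le_of_lt hy hx)]
    rw [hxy]
    have : s - y = -(y - s) := by ring
    rw [this, norm_neg]
    exact hy.trans hx.le
  · rw [clip, clip, if_neg hx, if_neg hy]
    simp

/-- The contraction map whose fixed point is `f^s(t)`. -/
noncomputable def auxG (F : NAField K) (a b : K) (f : K → K) (s t x : K) : K :=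
  (F.clip s x) ^ F.q + (a * t - f (F.clip s x)) / b

lemma norm_at_sub_f_le (F : NAField K) {a t : K} {f : K → K} (ha : ‖a‖ ≤ 1)
    (ht : ‖t‖ ≤ 1) (hf : F.IsLip f) {c : K} (hc : ‖c‖ ≤ 1) : ‖a * t - f c‖ ≤ 1 := by
  refine (F.na_sub_le' _ _).trans (max_le ?_ (hf.1 c hc))
  rw [norm_mul]
  calc ‖a‖ * ‖t‖ ≤ 1 * 1 := mul_le_mul ha ht (norm_nonneg t) one_pos.le
    _ = 1 := one_mul 1

lemma auxG_mem (F : NAField K) {a b : K} {f : K → K} {s t : K}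
    (ha : ‖a‖ ≤ 1) (hb : ‖b‖ = (F.q : ℝ)) (hf : F.IsLip f)
    (hs : ‖s‖ ≤ 1) (ht : ‖t‖ ≤ 1) (x : K) :
    ‖F.auxG a b f s t x - s‖ ≤ ((F.q : ℝ))⁻¹ := by
  set c := F.clip s x with hc
  have hcb : ‖c - s‖ ≤ ((F.q : ℝ))⁻¹ := F.clip_dist s x
  have hc1 : ‖c‖ ≤ 1 := F.ball_norm_le hs hcb
  have hd : F.auxG a b f s t x - s = ((c ^ F.q - c) + (c - s)) + (a * t - f c) / b := by
    rw [auxG, ← hc]; ring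
  rw [hd]
  refine (F.na _ _).trans (max_le ((F.na _ _).trans (max_le ?_ hcb)) ?_)
  · exact F.pow_q_sub_self_s10 hc1
  · show ‖(a * t - f c) / b‖ ≤ ((F.q : ℝ))⁻¹
    rw [norm_div, hb]
    rw [div_le_iff₀ F.Qpos]
    calc ‖a * t - f c‖ ≤ 1 := F.norm_at_sub_f_le ha ht hf hc1
      _ = ((F.q : ℝ))⁻¹ * (F.q : ℝ) := by
        rw [inv_mul_cancel₀ (ne_of_gt F.Qpos)]

lemma auxG_contract (F : NAField K) {a b : K} {f : K → K} {s t : K}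
    (hb : ‖b‖ = (F.q : ℝ)) (hf : F.IsLip f) (hs : ‖s‖ ≤ 1) (x y : K) :
    ‖F.auxG a b f s t x - F.auxG a b f s t y‖ ≤ ((F.q : ℝ))⁻¹ * ‖x - y‖ := by
  set c := F.clip s x with hc
  set c' := F.clip s y with hc'
  have hcb : ‖c - s‖ ≤ ((F.q : ℝ))⁻¹ := F.clip_dist s x
  have hcb' : ‖c' - s‖ ≤ ((F.q : ℝ))⁻¹ := F.clip_dist s y
  have hc1 : ‖c‖ ≤ 1 := F.ball_norm_le hs hcb
  have hc1' : ‖c'‖ ≤ 1 := F.ball_norm_le hs hcb'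
  have hcc : ‖c - c'‖ ≤ ((F.q : ℝ))⁻¹ := F.ball_diff_le hcb hcb'
  have hb0 : b ≠ 0 := by
    intro h0
    rw [h0, norm_zero] at hb
    linarith [F.Qpos]
  have hd : F.auxG a b f s t x - F.auxG a b f s t y
      = (c ^ F.q - c' ^ F.q) + (f c' - f c) / b := by
    rw [auxG, auxG, ← hc, ← hc']
    field_simp
    ring
  have hstep : ‖F.auxG a b f s t x - F.auxG a b f s t y‖ ≤ ((F.q : ℝ))⁻¹ * ‖c - c'‖ := by
    rw [hd]
    refine (F.na _ _).trans (max_le (F.pow_q_lip hc1 hc1' hcc) ?_)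
    show ‖(f c' - f c) / b‖ ≤ ((F.q : ℝ))⁻¹ * ‖c - c'‖
    rw [norm_div, hb]
    rw [div_le_iff₀ F.Qpos]
    have h1 : ‖f c' - f c‖ ≤ ((F.q : ℝ))⁻¹ * ‖c' - c‖ := hf.2 c' c hc1' hc1
    have h2 : ‖c' - c‖ = ‖c - c'‖ := by rw [← norm_neg]; congr 1; ring
    rw [h2] at h1
    calc ‖f c' - f c‖ ≤ ((F.q : ℝ))⁻¹ * ‖c - c'‖ := h1
      _ ≤ ((F.q : ℝ))⁻¹ * ‖c - c'‖ * 1 := by rw [mul_one]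
      _ ≤ ((F.q : ℝ))⁻¹ * ‖c - c'‖ * (F.q : ℝ) := by
          refine mul_le_mul_of_nonneg_left ?_ (by positivity)
          linarith [F.oneltQ]
  refine hstep.trans (mul_le_mul_of_nonneg_left ?_ F.Qinv_pos.le)
  exact F.clip_lip s x y

lemma auxG_contracting (F : NAField K) {a b : K} {f : K → K} {s t : K}
    (ha : ‖a‖ ≤ 1) (hb : ‖b‖ = (F.q : ℝ)) (hf : F.IsLip f)
    (hs : ‖s‖ ≤ 1) (ht : ‖t‖ ≤ 1) :
    ContractingWith 2⁻¹ (F.auxG a b f s t) := by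
  constructor
  · rw [← NNReal.coe_lt_coe]
    push_cast
    norm_num
  · apply LipschitzWith.of_dist_le_mul
    intro x y
    rw [dist_eq_norm, dist_eq_norm]
    have h2q : (2 : ℝ) ≤ (F.q : ℝ) := by exact_mod_cast F.two_le_q
    have hinv : ((F.q : ℝ))⁻¹ ≤ 2⁻¹ := by
      rw [inv_le_inv₀ F.Qpos (by norm_num)]
      exact h2q
    refine le_trans (F.auxG_contract hb hf hs x y) ?_
    refine mul_le_mul_of_nonneg_right ?_ (norm_nonneg _)
    have hco : (((2 : NNReal)⁻¹ : NNReal) : ℝ) = (2 : ℝ)⁻¹ := by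
      push_cast
      norm_num
    rw [hco]
    exact hinv

/-- The function `f^s`. -/
noncomputable def auxFs (F : NAField K) (a b : K) (f : K → K) (s t : K) : K :=
  if h : ‖a‖ ≤ 1 ∧ ‖b‖ = (F.q : ℝ) ∧ F.IsLip f ∧ ‖s‖ ≤ 1 ∧ ‖t‖ ≤ 1 then
    haveI := F.complete
    ContractingWith.fixedPoint (F.auxG a b f s t)
      (F.auxG_contracting h.1 h.2.1 h.2.2.1 h.2.2.2.1 h.2.2.2.2)
  else s

lemma auxFs_spec (F : NAField K) {a b : K} {f : K → K} {s t : K}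
    (ha : ‖a‖ ≤ 1) (hb : ‖b‖ = (F.q : ℝ)) (hf : F.IsLip f)
    (hs : ‖s‖ ≤ 1) (ht : ‖t‖ ≤ 1) :
    ‖F.auxFs a b f s t - s‖ ≤ ((F.q : ℝ))⁻¹ ∧
      a * t + b * ((F.auxFs a b f s t) ^ F.q - F.auxFs a b f s t)
        - f (F.auxFs a b f s t) = 0 := by
  haveI := F.complete
  rw [auxFs, dif_pos ⟨ha, hb, hf, hs, ht⟩]
  set x := ContractingWith.fixedPoint (F.auxG a b f s t)
    (F.auxG_contracting ha hb hf hs ht) with hxdef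
  have hfix : F.auxG a b f s t x = x :=
    ContractingWith.fixedPoint_isFixedPt (F.auxG_contracting ha hb hf hs ht)
  have hball : ‖x - s‖ ≤ ((F.q : ℝ))⁻¹ := by
    conv_lhs => rw [← hfix]
    exact F.auxG_mem ha hb hf hs ht x
  refine ⟨hball, ?_⟩
  have hclip : F.clip s x = x := F.clip_eq hball
  have hb0 : b ≠ 0 := by
    intro h0
    rw [h0, norm_zero] at hb
    linarith [F.Qpos]
  have hfix' : x = x ^ F.q + (a * t - f x) / b := by
    conv_lhs => rw [← hfix]
    rw [auxG, hclip]
  have h2 : b * x = b * x ^ F.q + (a * t - f x) := by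
    conv_lhs => rw [hfix']
    rw [mul_add, mul_div_cancel₀ _ hb0]
  linear_combination (-1 : K) * h2

lemma Ekey (F : NAField K) {b : K} {f : K → K} (hb : ‖b‖ = (F.q : ℝ))
    (hf : F.IsLip f) {s : K} (hs : ‖s‖ ≤ 1) {x x' : K}
    (hx : ‖x - s‖ ≤ ((F.q : ℝ))⁻¹) (hx' : ‖x' - s‖ ≤ ((F.q : ℝ))⁻¹) :
    ‖(b * (x ^ F.q - x) - f x) - (b * (x' ^ F.q - x') - f x')‖
      = (F.q : ℝ) * ‖x - x'‖ := by
  rcases eq_or_ne x x' with rfl | hne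
  · simp
  · have hx1 : ‖x‖ ≤ 1 := F.ball_norm_le hs hx
    have hx1' : ‖x'‖ ≤ 1 := F.ball_norm_le hs hx'
    have hxx : ‖x - x'‖ ≤ ((F.q : ℝ))⁻¹ := F.ball_diff_le hx hx'
    have hxx0 : 0 < ‖x - x'‖ := by
      rw [norm_pos_iff, sub_ne_zero]
      exact hne
    have hd : (b * (x ^ F.q - x) - f x) - (b * (x' ^ F.q - x') - f x')
        = (-(b * (x - x'))) + (b * (x ^ F.q - x' ^ F.q) - (f x - f x')) := by ring
    have hu : ‖-(b * (x - x'))‖ = (F.q : ℝ) * ‖x - x'‖ := by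
      rw [norm_neg, norm_mul, hb]
    have hv : ‖b * (x ^ F.q - x' ^ F.q) - (f x - f x')‖ < (F.q : ℝ) * ‖x - x'‖ := by
      have h1 : ‖b * (x ^ F.q - x' ^ F.q)‖ ≤ ‖x - x'‖ := by
        rw [norm_mul, hb]
        calc (F.q : ℝ) * ‖x ^ F.q - x' ^ F.q‖
            ≤ (F.q : ℝ) * (((F.q : ℝ))⁻¹ * ‖x - x'‖) :=
              mul_le_mul_of_nonneg_left (F.pow_q_lip hx1 hx1' hxx) F.Qpos.le
          _ = ‖x - x'‖ := by
              rw [← mul_assoc, mul_inv_cancel₀ (ne_of_gt F.Qpos), one_mul]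
      have h2 : ‖f x - f x'‖ ≤ ‖x - x'‖ := by
        calc ‖f x - f x'‖ ≤ ((F.q : ℝ))⁻¹ * ‖x - x'‖ := hf.2 x x' hx1 hx1'
          _ ≤ 1 * ‖x - x'‖ := mul_le_mul_of_nonneg_right F.Qinv_le_one (norm_nonneg _)
          _ = ‖x - x'‖ := one_mul _
      have h3 : ‖x - x'‖ < (F.q : ℝ) * ‖x - x'‖ := by
        nlinarith [F.oneltQ]
      exact lt_of_le_of_lt ((F.na_sub_le' _ _).trans (max_le h1 h2)) h3
    rw [hd, F.na_add_eq' (by rw [hu]; exact hv), hu]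

end NAField
theorem stmt10 (F : NAField K) (a b : K) (ha0 : a ≠ 0) (ha : ‖a‖ < 1)
    (hb : ‖b‖ = (F.q : ℝ)) (f : K → K) (hf : F.IsLip f)
    (δ : ℝ) (hδ0 : 0 < δ) (hδ1 : δ ≤ 1) :
    ∃ fs : K → K → K,
      (∀ s ∈ F.reps, F.IsLip (fs s) ∧
        ∀ t : K, ‖t‖ ≤ 1 → ‖fs s t - s‖ ≤ ((F.q : ℝ))⁻¹) ∧
      ((F.Tmap a b ⁻¹' Vnbhd f δ) ∩ unitPoly K
          = ⋃ s ∈ F.reps, Vnbhd (fs s) (((F.q : ℝ))⁻¹ * δ)) ∧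
      (∀ s ∈ F.reps, ∀ s' ∈ F.reps, s ≠ s' →
        Disjoint (Vnbhd (fs s) (((F.q : ℝ))⁻¹ * δ))
          (Vnbhd (fs s') (((F.q : ℝ))⁻¹ * δ))) := by
  classical
  have ha1 : ‖a‖ ≤ 1 := ha.le
  have hδq : ((F.q : ℝ))⁻¹ * δ ≤ ((F.q : ℝ))⁻¹ := mul_le_of_le_one_right F.Qinv_pos.le hδ1
  -- the central equivalence
  have hball : ∀ s : K, s ∈ F.reps → ∀ t : K, ‖t‖ ≤ 1 →
      ‖F.auxFs a b f s t - s‖ ≤ ((F.q : ℝ))⁻¹ :=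
    fun s hs t ht => (F.auxFs_spec ha1 hb hf (F.norm_reps s hs) ht).1
  have hE : ∀ s : K, s ∈ F.reps → ∀ x y : K, ‖y‖ ≤ 1 → ‖x - s‖ ≤ ((F.q : ℝ))⁻¹ →
      ‖a * y + b * (x ^ F.q - x) - f x‖ = (F.q : ℝ) * ‖x - F.auxFs a b f s y‖ := by
    intro s hs x y hy hxs
    have hs1 : ‖s‖ ≤ 1 := F.norm_reps s hs
    have hspec := F.auxFs_spec ha1 hb hf hs1 hy
    have hdecomp : a * y + b * (x ^ F.q - x) - f x
        = (b * (x ^ F.q - x) - f x)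
          - (b * ((F.auxFs a b f s y) ^ F.q - F.auxFs a b f s y) - f (F.auxFs a b f s y)) := by
      linear_combination hspec.2
    rw [hdecomp, F.Ekey hb hf hs1 hxs hspec.1]
  refine ⟨F.auxFs a b f, ?_, ?_, ?_⟩
  · -- Lipschitz properties
    intro s hs
    have hs1 : ‖s‖ ≤ 1 := F.norm_reps s hs
    refine ⟨⟨fun t ht => F.ball_norm_le hs1 (hball s hs t ht), ?_⟩, hball s hs⟩
    intro t₁ t₂ ht₁ ht₂
    have h₁ := (F.auxFs_spec ha1 hb hf hs1 ht₁).2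
    have h₂ := (F.auxFs_spec ha1 hb hf hs1 ht₂).2
    set x₁ := F.auxFs a b f s t₁ with hx₁
    set x₂ := F.auxFs a b f s t₂ with hx₂
    have hdiff : (b * (x₁ ^ F.q - x₁) - f x₁) - (b * (x₂ ^ F.q - x₂) - f x₂)
        = a * (t₂ - t₁) := by linear_combination h₁ - h₂
    have hkey := F.Ekey hb hf hs1 (hball s hs t₁ ht₁) (hball s hs t₂ ht₂)
    rw [hdiff, norm_mul] at hkey
    have h21 : ‖t₂ - t₁‖ = ‖t₁ - t₂‖ := by rw [← norm_neg]; congr 1; ring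
    have hle : (F.q : ℝ) * ‖x₁ - x₂‖ ≤ ‖t₁ - t₂‖ := by
      rw [← hkey, h21]
      calc ‖a‖ * ‖t₁ - t₂‖ ≤ 1 * ‖t₁ - t₂‖ :=
            mul_le_mul_of_nonneg_right ha1 (norm_nonneg _)
        _ = ‖t₁ - t₂‖ := one_mul _
    calc ‖x₁ - x₂‖ = ((F.q : ℝ))⁻¹ * ((F.q : ℝ) * ‖x₁ - x₂‖) := by
          rw [← mul_assoc, inv_mul_cancel₀ (ne_of_gt F.Qpos), one_mul]
      _ ≤ ((F.q : ℝ))⁻¹ * ‖t₁ - t₂‖ := mul_le_mul_of_nonneg_left hle F.Qinv_pos.le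
  · -- set equality
    ext p
    obtain ⟨x, y⟩ := p
    simp only [Set.mem_inter_iff, Set.mem_preimage, Set.mem_iUnion]
    constructor
    · rintro ⟨hpre, hx1, hy1⟩
      obtain ⟨t, θ, ht, hθ, heq⟩ := hpre
      have heq' : (a * y + b * (x ^ F.q - x), x) = (f t + θ, t) := heq
      rw [Prod.mk.injEq] at heq'
      obtain ⟨h1, h2⟩ := heq'
      subst h2
      refine ⟨F.rep x, F.rep_mem hx1, y, x - F.auxFs a b f (F.rep x) y, hy1, ?_, ?_⟩
      · have hEx := hE (F.rep x) (F.rep_mem hx1) x y hy1 (F.rep_dist hx1)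
        have hθ' : a * y + b * (x ^ F.q - x) - f x = θ := by linear_combination h1
        rw [hθ'] at hEx
        have hqd : (F.q : ℝ) * ‖x - F.auxFs a b f (F.rep x) y‖ ≤ δ := by
          rw [← hEx]; exact hθ
        calc ‖x - F.auxFs a b f (F.rep x) y‖
            = ((F.q : ℝ))⁻¹ * ((F.q : ℝ) * ‖x - F.auxFs a b f (F.rep x) y‖) := by
              rw [← mul_assoc, inv_mul_cancel₀ (ne_of_gt F.Qpos), one_mul]
          _ ≤ ((F.q : ℝ))⁻¹ * δ := mul_le_mul_of_nonneg_left hqd F.Qinv_pos.le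
      · rw [Prod.mk.injEq]
        constructor
        · ring
        · rfl
    · rintro ⟨s, hs, t, θ, ht, hθ, heq⟩
      have heq' : x = F.auxFs a b f s t + θ ∧ y = t := by
        rw [Prod.mk.injEq] at heq; exact heq
      obtain ⟨hx, hy⟩ := heq'
      subst hy
      have hs1 : ‖s‖ ≤ 1 := F.norm_reps s hs
      set X := F.auxFs a b f s y with hX
      have hXball : ‖X - s‖ ≤ ((F.q : ℝ))⁻¹ := hball s hs y ht
      have hθq : ‖θ‖ ≤ ((F.q : ℝ))⁻¹ := hθ.trans hδq
      have hxX : x - X = θ := by rw [hx]; ring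
      have hxball : ‖x - s‖ ≤ ((F.q : ℝ))⁻¹ := by
        have hd : x - s = θ + (X - s) := by rw [hx]; ring
        rw [hd]
        exact (F.na _ _).trans (max_le hθq hXball)
      have hx1 : ‖x‖ ≤ 1 := F.ball_norm_le hs1 hxball
      refine ⟨⟨x, a * y + b * (x ^ F.q - x) - f x, hx1, ?_, ?_⟩, hx1, ht⟩
      · rw [hE s hs x y ht hxball, ← hX, hxX]
        calc (F.q : ℝ) * ‖θ‖ ≤ (F.q : ℝ) * (((F.q : ℝ))⁻¹ * δ) :=
              mul_le_mul_of_nonneg_left hθ F.Qpos.le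
          _ = δ := by rw [← mul_assoc, mul_inv_cancel₀ (ne_of_gt F.Qpos), one_mul]
      · show (a * y + b * (x ^ F.q - x), x) = (f x + (a * y + b * (x ^ F.q - x) - f x), x)
        rw [Prod.mk.injEq]
        exact ⟨by ring, rfl⟩
  · -- disjointness
    intro s hs s' hs' hne
    rw [Set.disjoint_left]
    rintro ⟨x, y⟩ ⟨t, θ, ht, hθ, heq⟩ ⟨t', θ', ht', hθ', heq'⟩
    rw [Prod.mk.injEq] at heq heq'
    obtain ⟨hx, hy⟩ := heq
    obtain ⟨hx', hy'⟩ := heq'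
    rw [← hy] at hx ht
    rw [← hy'] at hx' ht'
    have hX : ‖F.auxFs a b f s y - s‖ ≤ ((F.q : ℝ))⁻¹ := hball s hs y ht
    have hX' : ‖F.auxFs a b f s' y - s'‖ ≤ ((F.q : ℝ))⁻¹ := hball s' hs' y ht'
    have hXs : ‖s - F.auxFs a b f s y‖ ≤ ((F.q : ℝ))⁻¹ := by
      rw [norm_sub_rev]; exact hX
    have hθq : ‖θ‖ ≤ ((F.q : ℝ))⁻¹ := hθ.trans hδq
    have hθq' : ‖θ'‖ ≤ ((F.q : ℝ))⁻¹ := hθ'.trans hδq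
    have hXX : ‖θ' - θ‖ ≤ ((F.q : ℝ))⁻¹ := (F.na_sub_le' _ _).trans (max_le hθq' hθq)
    have hss : ‖s - s'‖ ≤ ((F.q : ℝ))⁻¹ := by
      have hd : s - s' = ((s - F.auxFs a b f s y) + (θ' - θ))
          + (F.auxFs a b f s' y - s') := by
        have hee : F.auxFs a b f s y + θ = F.auxFs a b f s' y + θ' :=
          hx.symm.trans hx'
        linear_combination hee
      rw [hd]
      exact (F.na _ _).trans
        (max_le ((F.na _ _).trans (max_le hXs hXX)) hX')
    exact hne (F.close_reps_eq hs hs' hss)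
end
end

section
/- Let g : R → R be (1/q)-Lipschitz and 0 < ε ≤ 1. Then T(H_ε(g)) is the disjoint union over residue classes s ∈ F of sets H_{(|a|/q)ε}(g^s), where each g^s : R → R is (1/q)-Lipschitz with values in D_{1/q}(s). In other words, T maps a horizontal ε-tube bijectively onto q horizontal tubes of the much smaller radius |a|ε/q, one in each horizontal strip R × D_{1/q}(s). -/
open scoped Classical
open MeasureTheory Filter

noncomputable section

variable {K : Type*} [NormedField K]

namespace StmtAux

lemma q1R (F : NAField K) : (1:ℝ) < F.q := by exact_mod_cast F.one_lt_q
lemma qposR (F : NAField K) : (0:ℝ) < F.q := lt_trans one_pos (q1R F)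
lemma qinv_pos (F : NAField K) : (0:ℝ) < (F.q:ℝ)⁻¹ := inv_pos.mpr (qposR F)
lemma qinv_lt_one (F : NAField K) : (F.q:ℝ)⁻¹ < 1 := by
  rw [inv_lt_one₀ (qposR F)]; exact q1R F

lemma lt_one_le_qinv (F : NAField K) {x : K} (h : ‖x‖ < 1) : ‖x‖ ≤ (F.q:ℝ)⁻¹ := by
  rcases eq_or_ne x 0 with rfl | hx
  · simp [(qinv_pos F).le]
  obtain ⟨n, hn⟩ := F.valGroup x hx
  have hq := q1R F
  have hn0 : n < 0 := by
    by_contra hc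
    push_neg at hc
    have : (1:ℝ) ≤ (F.q:ℝ)^n := one_le_zpow₀ hq.le hc
    rw [hn] at h; linarith
  have : (F.q:ℝ)^n ≤ (F.q:ℝ)^(-1:ℤ) := by
    apply zpow_le_zpow_right₀ hq.le (by omega)
  rw [hn]; simpa using this

lemma nasub (F : NAField K) (x y : K) : ‖x - y‖ ≤ max ‖x‖ ‖y‖ := by
  have := F.na x (-y)
  simpa [sub_eq_add_neg] using this

lemma naadd_eq (F : NAField K) {x y : K} (h : ‖y‖ < ‖x‖) : ‖x + y‖ = ‖x‖ := by
  refine le_antisymm (le_trans (F.na x y) (by simp [h.le])) ?_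
  have h2 : ‖x‖ ≤ max ‖x + y‖ ‖y‖ := by
    have := nasub F (x + y) y
    simpa using this
  rcases max_cases ‖x + y‖ ‖y‖ with ⟨he, _⟩ | ⟨he, _⟩
  · rw [he] at h2; exact h2
  · rw [he] at h2; linarith

lemma nasum (F : NAField K) {ι : Type*} (s : Finset ι) (f : ι → K) {C : ℝ} (hC : 0 ≤ C)
    (h : ∀ i ∈ s, ‖f i‖ ≤ C) : ‖∑ i ∈ s, f i‖ ≤ C := by
  classical
  induction s using Finset.induction_on with
  | empty => simpa
  | @insert a s' hx ih =>
    rw [Finset.sum_insert hx]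
    refine le_trans (F.na _ _) (max_le (h a (by simp)) (ih fun i hi => h i (by simp [hi])))


def Oring (F : NAField K) : Subring K where
  carrier := {x : K | ‖x‖ ≤ 1}
  mul_mem' := by
    intro x y hx hy
    simp only [Set.mem_setOf_eq] at *
    calc ‖x*y‖ = ‖x‖*‖y‖ := norm_mul _ _
    _ ≤ 1 := mul_le_one₀ hx (norm_nonneg _) hy
  one_mem' := by simp
  add_mem' := by
    intro x y hx hy
    exact le_trans (F.na x y) (max_le hx hy)
  zero_mem' := by simp
  neg_mem' := by intro x hx; simpa using hx

def Mideal (F : NAField K) : Ideal (Oring F) where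
  carrier := {x | ‖(x:K)‖ < 1}
  add_mem' := by
    intro x y hx hy
    exact lt_of_le_of_lt (F.na (x:K) (y:K)) (max_lt hx hy)
  zero_mem' := by simp
  smul_mem' := by
    intro c x hx
    simp only [Set.mem_setOf_eq, smul_eq_mul, Subring.coe_mul] at *
    calc ‖(c:K)*(x:K)‖ = ‖(c:K)‖*‖(x:K)‖ := norm_mul _ _
    _ ≤ 1 * ‖(x:K)‖ := by
        apply mul_le_mul_of_nonneg_right c.2 (norm_nonneg _)
    _ < 1 := by simpa using hx

lemma Mmax (F : NAField K) : (Mideal F).IsMaximal := by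
  rw [Ideal.isMaximal_iff]
  constructor
  · simp [Mideal]
  · rintro J x hIJ hxM hxJ
    have hx1 : ‖(x:K)‖ = 1 := le_antisymm x.2 (not_lt.mp hxM)
    have hx0 : (x:K) ≠ 0 := by
      intro h; rw [h] at hx1; simp at hx1
    have hinv : ‖(x:K)⁻¹‖ ≤ 1 := by rw [norm_inv, hx1]; norm_num
    have hmul : (⟨(x:K)⁻¹, hinv⟩ : Oring F) * x = 1 := by
      ext; simp [inv_mul_cancel₀ hx0]
    exact hmul ▸ J.mul_mem_left _ hxJ

def repmap (F : NAField K) : {s // s ∈ F.reps} → (Oring F) ⧸ (Mideal F) :=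
  fun s => Ideal.Quotient.mk _ ⟨s.1, F.norm_reps s.1 s.2⟩

lemma repmap_bij (F : NAField K) : Function.Bijective (repmap F) := by
  constructor
  · rintro ⟨s, hs⟩ ⟨t, ht⟩ h
    simp only [repmap, Ideal.Quotient.mk_eq_mk_iff_sub_mem] at h
    have hlt : ‖s - t‖ < 1 := h
    by_contra hne
    have hne' : s ≠ t := by simpa using hne
    exact absurd (lt_one_le_qinv F hlt) (not_le.mpr (F.reps_sep s hs t ht hne'))
  · intro y
    obtain ⟨x, rfl⟩ := Ideal.Quotient.mk_surjective y
    obtain ⟨s, hs, hxs⟩ := F.reps_cover (x:K) x.2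
    refine ⟨⟨s, hs⟩, ?_⟩
    simp only [repmap, Ideal.Quotient.mk_eq_mk_iff_sub_mem]
    show ‖((⟨s, F.norm_reps s hs⟩ - x : Oring F) : K)‖ < 1
    have : ‖s - (x:K)‖ ≤ (F.q:ℝ)⁻¹ := by rwa [norm_sub_rev]
    exact lt_of_le_of_lt this (qinv_lt_one F)

instance quotField (F : NAField K) : Field ((Oring F) ⧸ (Mideal F)) :=
  @Ideal.Quotient.field _ _ (Mideal F) (Mmax F)

instance quotFintype (F : NAField K) : Fintype ((Oring F) ⧸ (Mideal F)) :=
  Fintype.ofBijective _ (repmap_bij F)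

lemma quotCard (F : NAField K) : Fintype.card ((Oring F) ⧸ (Mideal F)) = F.q := by
  rw [← Fintype.card_of_bijective (repmap_bij F), Fintype.card_coe, F.card_reps]

lemma fermat (F : NAField K) {t : K} (ht : ‖t‖ ≤ 1) : ‖t ^ F.q - t‖ ≤ (F.q:ℝ)⁻¹ := by
  set tO : Oring F := ⟨t, ht⟩ with htO
  have h1 : (Ideal.Quotient.mk (Mideal F) tO) ^ Fintype.card ((Oring F) ⧸ (Mideal F))
      = Ideal.Quotient.mk (Mideal F) tO := FiniteField.pow_card _
  rw [quotCard F, ← map_pow, Ideal.Quotient.mk_eq_mk_iff_sub_mem] at h1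
  have h2 : ‖((tO ^ F.q - tO : Oring F) : K)‖ < 1 := h1
  have h3 : ((tO ^ F.q - tO : Oring F) : K) = t ^ F.q - t := by push_cast [htO]; ring
  rw [h3] at h2
  exact lt_one_le_qinv F h2

lemma norm_q_cast (F : NAField K) : ‖((F.q : ℕ) : K)‖ ≤ (F.q:ℝ)⁻¹ := by
  have h1 : ((F.q : ℕ) : (Oring F) ⧸ (Mideal F)) = 0 := by
    rw [← quotCard F]; exact Nat.cast_card_eq_zero _
  rw [← map_natCast (Ideal.Quotient.mk (Mideal F)), Ideal.Quotient.eq_zero_iff_mem] at h1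
  have h2 : ‖(((F.q : ℕ) : Oring F) : K)‖ < 1 := h1
  have h3 : (((F.q : ℕ) : Oring F) : K) = ((F.q : ℕ) : K) := by push_cast; ring
  rw [h3] at h2
  exact lt_one_le_qinv F h2


/-- `ψ(t) = b(t^q - t) + a g(t)`: first coordinate of `T(t, g t)`. -/
def psi (F : NAField K) (a b : K) (g : K → K) : K → K :=
  fun t => b * (t ^ F.q - t) + a * g t

lemma pow_sub_pow_le (F : NAField K) {x y : K} (hx : ‖x‖ ≤ 1) (hy : ‖y‖ ≤ 1) (n : ℕ) :
    ‖x ^ n - y ^ n‖ ≤ ‖x - y‖ := by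
  have h := geom_sum₂_mul x y n
  have hS : ‖∑ i ∈ Finset.range n, x ^ i * y ^ (n - 1 - i)‖ ≤ 1 := by
    apply nasum F _ _ zero_le_one
    intro i _
    calc ‖x ^ i * y ^ (n-1-i)‖ = ‖x‖^i * ‖y‖^(n-1-i) := by rw [norm_mul, norm_pow, norm_pow]
    _ ≤ 1 := mul_le_one₀ (pow_le_one₀ (norm_nonneg _) hx) (by positivity)
        (pow_le_one₀ (norm_nonneg _) hy)
  calc ‖x ^ n - y ^ n‖ = ‖∑ i ∈ Finset.range n, x ^ i * y ^ (n - 1 - i)‖ * ‖x - y‖ := by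
        rw [← h, norm_mul]
  _ ≤ 1 * ‖x - y‖ := mul_le_mul_of_nonneg_right hS (norm_nonneg _)
  _ = ‖x - y‖ := one_mul _

lemma Sbound (F : NAField K) {x y : K} (hx : ‖x‖ ≤ 1) (hy : ‖y‖ ≤ 1)
    (hxy : ‖x - y‖ ≤ (F.q:ℝ)⁻¹) :
    ‖∑ i ∈ Finset.range F.q, x ^ i * y ^ (F.q - 1 - i)‖ ≤ (F.q:ℝ)⁻¹ := by
  have hterm : ∀ i ∈ Finset.range F.q, x ^ i * y ^ (F.q - 1 - i)
      = (x ^ i - y ^ i) * y ^ (F.q - 1 - i) + y ^ (F.q - 1) := by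
    intro i hi
    have hiq : i + (F.q - 1 - i) = F.q - 1 := by
      simp only [Finset.mem_range] at hi; omega
    rw [sub_mul, ← pow_add, hiq]; ring
  rw [Finset.sum_congr rfl hterm, Finset.sum_add_distrib, Finset.sum_const,
    Finset.card_range, nsmul_eq_mul]
  refine le_trans (F.na _ _) (max_le ?_ ?_)
  · apply nasum F _ _ (qinv_pos F).le
    intro i _
    calc ‖(x ^ i - y ^ i) * y ^ (F.q - 1 - i)‖ = ‖x ^ i - y ^ i‖ * ‖y ^ (F.q-1-i)‖ := norm_mul _ _
    _ ≤ ‖x - y‖ * 1 := by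
        apply mul_le_mul (pow_sub_pow_le F hx hy i) ?_ (norm_nonneg _) (norm_nonneg _)
        rw [norm_pow]; exact pow_le_one₀ (norm_nonneg _) hy
    _ ≤ (F.q:ℝ)⁻¹ := by rw [mul_one]; exact hxy
  · calc ‖((F.q : ℕ) : K) * y ^ (F.q - 1)‖ = ‖((F.q : ℕ) : K)‖ * ‖y ^ (F.q-1)‖ := norm_mul _ _
    _ ≤ (F.q:ℝ)⁻¹ * 1 := by
        apply mul_le_mul (norm_q_cast F) ?_ (norm_nonneg _) (qinv_pos F).le
        rw [norm_pow]; exact pow_le_one₀ (norm_nonneg _) hy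
    _ = (F.q:ℝ)⁻¹ := mul_one _

lemma psi_sub (F : NAField K) (a b : K) (g : K → K) (t u : K) :
    psi F a b g t - psi F a b g u
      = b * (t - u) * ((∑ i ∈ Finset.range F.q, t ^ i * u ^ (F.q - 1 - i)) - 1)
        + a * (g t - g u) := by
  have h := geom_sum₂_mul t u F.q
  simp only [psi]
  linear_combination (-b) * h

lemma psi_norm_le (F : NAField K) {a b : K} (ha : ‖a‖ ≤ 1) (hb : ‖b‖ = F.q)
    {g : K → K} {t : K} (ht : ‖t‖ ≤ 1) (hgt : ‖g t‖ ≤ 1) : ‖psi F a b g t‖ ≤ 1 := by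
  refine le_trans (F.na _ _) (max_le ?_ ?_)
  · calc ‖b * (t ^ F.q - t)‖ = ‖b‖ * ‖t ^ F.q - t‖ := norm_mul _ _
    _ ≤ (F.q:ℝ) * (F.q:ℝ)⁻¹ := by
        rw [hb]; exact mul_le_mul_of_nonneg_left (fermat F ht) (qposR F).le
    _ = 1 := mul_inv_cancel₀ (qposR F).ne'
  · calc ‖a * g t‖ = ‖a‖ * ‖g t‖ := norm_mul _ _
    _ ≤ 1 := mul_le_one₀ ha (norm_nonneg _) hgt

lemma norm_S_sub_one (F : NAField K) {t u : K} (ht : ‖t‖ ≤ 1) (hu : ‖u‖ ≤ 1)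
    (hclose : ‖t - u‖ ≤ (F.q:ℝ)⁻¹) :
    ‖(∑ i ∈ Finset.range F.q, t ^ i * u ^ (F.q - 1 - i)) - 1‖ = 1 := by
  have hS := Sbound F ht hu hclose
  have h1 : ‖(∑ i ∈ Finset.range F.q, t ^ i * u ^ (F.q - 1 - i)) - 1‖
      = ‖(-1 : K) + ∑ i ∈ Finset.range F.q, t ^ i * u ^ (F.q - 1 - i)‖ := by
    congr 1; ring
  rw [h1, naadd_eq F (by simpa using lt_of_le_of_lt hS (qinv_lt_one F))]
  simp

lemma psi_expand (F : NAField K) {a b : K} (ha : ‖a‖ ≤ 1) (hb : ‖b‖ = F.q)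
    {g : K → K} {t u : K} (ht : ‖t‖ ≤ 1) (hu : ‖u‖ ≤ 1)
    (hclose : ‖t - u‖ ≤ (F.q:ℝ)⁻¹)
    (hgl : ‖g t - g u‖ ≤ (F.q:ℝ)⁻¹ * ‖t - u‖) :
    ‖psi F a b g t - psi F a b g u‖ = (F.q:ℝ) * ‖t - u‖ := by
  rcases eq_or_ne t u with rfl | hne
  · simp
  have htu : (0:ℝ) < ‖t - u‖ := by
    rw [norm_pos_iff]; exact sub_ne_zero_of_ne hne
  rw [psi_sub]
  have hA : ‖b * (t - u) * ((∑ i ∈ Finset.range F.q, t ^ i * u ^ (F.q - 1 - i)) - 1)‖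
      = (F.q:ℝ) * ‖t - u‖ := by
    rw [norm_mul, norm_mul, hb, norm_S_sub_one F ht hu hclose, mul_one]
  have hB : ‖a * (g t - g u)‖ < (F.q:ℝ) * ‖t - u‖ := by
    calc ‖a * (g t - g u)‖ = ‖a‖ * ‖g t - g u‖ := norm_mul _ _
    _ ≤ 1 * ((F.q:ℝ)⁻¹ * ‖t - u‖) := by
        exact mul_le_mul ha hgl (norm_nonneg _) zero_le_one
    _ = (F.q:ℝ)⁻¹ * ‖t - u‖ := one_mul _
    _ < (F.q:ℝ) * ‖t - u‖ := by
        apply mul_lt_mul_of_pos_right _ htu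
        exact lt_trans (qinv_lt_one F) (q1R F)
  rw [naadd_eq F (by rw [hA]; exact hB), hA]

lemma mem_ball_norm_le (F : NAField K) {s y : K} (hs : ‖s‖ ≤ 1)
    (hy : ‖y - s‖ ≤ (F.q:ℝ)⁻¹) : ‖y‖ ≤ 1 := by
  have : ‖(y - s) + s‖ ≤ max ‖y - s‖ ‖s‖ := F.na _ _
  rw [sub_add_cancel] at this
  exact le_trans this (max_le (le_trans hy (qinv_lt_one F).le) hs)

lemma exists_root (F : NAField K) {a b : K} (ha : ‖a‖ ≤ 1) (hb : ‖b‖ = F.q)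
    {g : K → K} (hgb : ∀ t : K, ‖t‖ ≤ 1 → ‖g t‖ ≤ 1)
    (hgl : ∀ t u : K, ‖t‖ ≤ 1 → ‖u‖ ≤ 1 → ‖g t - g u‖ ≤ (F.q:ℝ)⁻¹ * ‖t - u‖)
    {s : K} (hs : ‖s‖ ≤ 1) {u : K} (hu : ‖u‖ ≤ 1) :
    ∃ t : K, ‖t - s‖ ≤ (F.q:ℝ)⁻¹ ∧ psi F a b g t = u := by
  haveI : CompleteSpace K := F.complete
  have hbne : b ≠ 0 := by
    intro h; rw [h, norm_zero] at hb; exact (qposR F).ne hb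
  set f : K → K := fun y => y + b⁻¹ * (psi F a b g y - u) with hf
  -- contraction estimate
  have hdiff : ∀ y₁ y₂ : K, ‖y₁ - s‖ ≤ (F.q:ℝ)⁻¹ → ‖y₂ - s‖ ≤ (F.q:ℝ)⁻¹ →
      ‖f y₁ - f y₂‖ ≤ (F.q:ℝ)⁻¹ * ‖y₁ - y₂‖ := by
    intro y₁ y₂ h₁ h₂
    have hy₁ : ‖y₁‖ ≤ 1 := mem_ball_norm_le F hs h₁
    have hy₂ : ‖y₂‖ ≤ 1 := mem_ball_norm_le F hs h₂
    have hcl : ‖y₁ - y₂‖ ≤ (F.q:ℝ)⁻¹ := by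
      have : ‖(y₁ - s) - (y₂ - s)‖ ≤ max ‖y₁ - s‖ ‖y₂ - s‖ := nasub F _ _
      simp only [sub_sub_sub_cancel_right] at this
      exact le_trans this (max_le h₁ h₂)
    have hid : f y₁ - f y₂
        = (y₁ - y₂) * (∑ i ∈ Finset.range F.q, y₁ ^ i * y₂ ^ (F.q - 1 - i))
          + b⁻¹ * a * (g y₁ - g y₂) := by
      have h := psi_sub F a b g y₁ y₂
      have hb1 : b⁻¹ * b = 1 := inv_mul_cancel₀ hbne
      calc f y₁ - f y₂ = (y₁ - y₂) + b⁻¹ * (psi F a b g y₁ - psi F a b g y₂) := by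
            simp only [hf]; ring
      _ = _ := by
            rw [h]
            linear_combination ((y₁ - y₂) * ((∑ i ∈ Finset.range F.q, y₁ ^ i * y₂ ^ (F.q - 1 - i)) - 1)) * hb1
    rw [hid]
    refine le_trans (F.na _ _) (max_le ?_ ?_)
    · calc ‖(y₁ - y₂) * _‖ = ‖y₁ - y₂‖ * ‖∑ i ∈ Finset.range F.q, y₁ ^ i * y₂ ^ (F.q-1-i)‖ :=
          norm_mul _ _
      _ ≤ ‖y₁ - y₂‖ * (F.q:ℝ)⁻¹ :=
          mul_le_mul_of_nonneg_left (Sbound F hy₁ hy₂ hcl) (norm_nonneg _)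
      _ = (F.q:ℝ)⁻¹ * ‖y₁ - y₂‖ := mul_comm _ _
    · have hbi : ‖b⁻¹‖ = (F.q:ℝ)⁻¹ := by rw [norm_inv, hb]
      calc ‖b⁻¹ * a * (g y₁ - g y₂)‖ = ‖b⁻¹‖ * ‖a‖ * ‖g y₁ - g y₂‖ := by
            rw [norm_mul, norm_mul]
      _ ≤ (F.q:ℝ)⁻¹ * 1 * ((F.q:ℝ)⁻¹ * ‖y₁ - y₂‖) := by
            apply mul_le_mul _ (hgl y₁ y₂ hy₁ hy₂) (norm_nonneg _) (by positivity)
            rw [hbi]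
            exact mul_le_mul_of_nonneg_left ha (qinv_pos F).le
      _ ≤ 1 * ((F.q:ℝ)⁻¹ * ‖y₁ - y₂‖) := by
            apply mul_le_mul_of_nonneg_right _ (by positivity)
            rw [mul_one]; exact (qinv_lt_one F).le
      _ = (F.q:ℝ)⁻¹ * ‖y₁ - y₂‖ := one_mul _
  -- maps ball into ball
  have hmaps : ∀ y : K, ‖y - s‖ ≤ (F.q:ℝ)⁻¹ → ‖f y - s‖ ≤ (F.q:ℝ)⁻¹ := by
    intro y hy
    have h1 : ‖f y - f s‖ ≤ (F.q:ℝ)⁻¹ * ‖y - s‖ :=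
      hdiff y s hy (by simp [(qinv_pos F).le])
    have h2 : ‖f s - s‖ ≤ (F.q:ℝ)⁻¹ := by
      have : f s - s = b⁻¹ * (psi F a b g s - u) := by simp only [hf]; ring
      rw [this, norm_mul, norm_inv, hb]
      calc (F.q:ℝ)⁻¹ * ‖psi F a b g s - u‖ ≤ (F.q:ℝ)⁻¹ * 1 := by
            apply mul_le_mul_of_nonneg_left _ (qinv_pos F).le
            exact le_trans (nasub F _ _) (max_le (psi_norm_le F ha hb hs (hgb s hs)) hu)
      _ = (F.q:ℝ)⁻¹ := mul_one _
    have : ‖(f y - f s) + (f s - s)‖ ≤ max ‖f y - f s‖ ‖f s - s‖ := F.na _ _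
    rw [sub_add_sub_cancel] at this
    refine le_trans this (max_le (le_trans h1 ?_) h2)
    calc (F.q:ℝ)⁻¹ * ‖y - s‖ ≤ (F.q:ℝ)⁻¹ * (F.q:ℝ)⁻¹ :=
        mul_le_mul_of_nonneg_left hy (qinv_pos F).le
    _ ≤ 1 * (F.q:ℝ)⁻¹ :=
        mul_le_mul_of_nonneg_right (qinv_lt_one F).le (qinv_pos F).le
    _ = (F.q:ℝ)⁻¹ := one_mul _
  -- fixed point on the closed ball
  haveI : Nonempty (Metric.closedBall s ((F.q:ℝ)⁻¹)) :=
    ⟨⟨s, Metric.mem_closedBall_self (qinv_pos F).le⟩⟩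
  haveI : CompleteSpace (Metric.closedBall s ((F.q:ℝ)⁻¹)) :=
    Metric.isClosed_closedBall.completeSpace_coe
  have hmemD : ∀ y : K, y ∈ Metric.closedBall s ((F.q:ℝ)⁻¹) ↔ ‖y - s‖ ≤ (F.q:ℝ)⁻¹ := by
    intro y; rw [Metric.mem_closedBall, dist_eq_norm]
  have hmem : ∀ y : Metric.closedBall s ((F.q:ℝ)⁻¹),
      f (y : K) ∈ Metric.closedBall s ((F.q:ℝ)⁻¹) := by
    intro y
    rw [hmemD]
    exact hmaps y ((hmemD _).mp y.2)
  set fh : Metric.closedBall s ((F.q:ℝ)⁻¹) → Metric.closedBall s ((F.q:ℝ)⁻¹) :=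
    fun y => ⟨f (y : K), hmem y⟩ with hfh
  have hcon : ContractingWith ⟨(F.q:ℝ)⁻¹, (qinv_pos F).le⟩ fh := by
    constructor
    · exact_mod_cast qinv_lt_one F
    · apply LipschitzWith.of_dist_le_mul
      intro x y
      simp only [Subtype.dist_eq, dist_eq_norm, NNReal.coe_mk]
      exact hdiff (x : K) (y : K) ((hmemD _).mp x.2) ((hmemD _).mp y.2)
  set t : Metric.closedBall s ((F.q:ℝ)⁻¹) := ContractingWith.fixedPoint fh hcon with htdef
  have hfix : fh t = t := ContractingWith.fixedPoint_isFixedPt hcon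
  have hfixK : f (t : K) = (t : K) := congrArg Subtype.val hfix
  refine ⟨(t : K), (hmemD _).mp t.2, ?_⟩
  have hzero : b⁻¹ * (psi F a b g (t : K) - u) = 0 := by
    have h := hfixK
    simp only [hf] at h
    exact add_eq_left.mp h
  have h2 : psi F a b g (t : K) - u = 0 := by
    rcases mul_eq_zero.mp hzero with h | h
    · exact absurd h (inv_ne_zero hbne)
    · exact h
  exact sub_eq_zero.mp h2
end StmtAux

theorem stmt11 (F : NAField K) (a b : K) (ha0 : a ≠ 0) (ha : ‖a‖ < 1)
    (hb : ‖b‖ = (F.q : ℝ)) (g : K → K) (hg : F.IsLip g)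
    (ε : ℝ) (hε0 : 0 < ε) (hε1 : ε ≤ 1) :
    ∃ gs : K → K → K,
      (∀ s ∈ F.reps, F.IsLip (gs s) ∧
        ∀ t : K, ‖t‖ ≤ 1 → ‖gs s t - s‖ ≤ ((F.q : ℝ))⁻¹) ∧
      (F.Tmap a b '' Hnbhd g ε
          = ⋃ s ∈ F.reps, Hnbhd (gs s) (‖a‖ / (F.q : ℝ) * ε)) ∧
      Set.InjOn (F.Tmap a b) (Hnbhd g ε) ∧
      (∀ s ∈ F.reps, ∀ s' ∈ F.reps, s ≠ s' →
        Disjoint (Hnbhd (gs s) (‖a‖ / (F.q : ℝ) * ε))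
          (Hnbhd (gs s') (‖a‖ / (F.q : ℝ) * ε))) := by
  classical
  obtain ⟨hgb, hgl⟩ := hg
  have ha1 : ‖a‖ ≤ 1 := ha.le
  have key : ∀ s ∈ F.reps, ∀ u : K, ‖u‖ ≤ 1 →
      ∃ t : K, ‖t - s‖ ≤ (F.q:ℝ)⁻¹ ∧ StmtAux.psi F a b g t = u :=
    fun s hs u hu => StmtAux.exists_root F ha1 hb hgb hgl (F.norm_reps s hs) hu
  set gs : K → K → K :=
    fun s u => if h : s ∈ F.reps ∧ ‖u‖ ≤ 1 then (key s h.1 u h.2).choose else s with hgsdef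
  have hgs : ∀ s ∈ F.reps, ∀ u : K, ‖u‖ ≤ 1 →
      ‖gs s u - s‖ ≤ (F.q:ℝ)⁻¹ ∧ StmtAux.psi F a b g (gs s u) = u := by
    intro s hs u hu
    simp only [hgsdef, dif_pos (And.intro hs hu)]
    exact (key s hs u hu).choose_spec
  have hgnorm : ∀ s ∈ F.reps, ∀ u : K, ‖u‖ ≤ 1 → ‖gs s u‖ ≤ 1 := by
    intro s hs u hu
    exact StmtAux.mem_ball_norm_le F (F.norm_reps s hs) (hgs s hs u hu).1
  have hexp : ∀ t₁ t₂ : K, ‖t₁‖ ≤ 1 → ‖t₂‖ ≤ 1 → ‖t₁ - t₂‖ ≤ (F.q:ℝ)⁻¹ →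
      ‖StmtAux.psi F a b g t₁ - StmtAux.psi F a b g t₂‖ = (F.q:ℝ) * ‖t₁ - t₂‖ :=
    fun t₁ t₂ h1 h2 h3 => StmtAux.psi_expand F ha1 hb h1 h2 h3 (hgl t₁ t₂ h1 h2)
  have hqpos := StmtAux.qposR F
  have hδ0 : (0:ℝ) ≤ ‖a‖ / (F.q : ℝ) * ε := by positivity
  have hδqi : ‖a‖ / (F.q : ℝ) * ε ≤ (F.q:ℝ)⁻¹ := by
    calc ‖a‖ / (F.q : ℝ) * ε ≤ 1 / (F.q : ℝ) * 1 := by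
          gcongr
    _ = (F.q:ℝ)⁻¹ := by rw [one_div, mul_one]
  have hδ1 : ‖a‖ / (F.q : ℝ) * ε ≤ 1 := le_trans hδqi (StmtAux.qinv_lt_one F).le
  have hqδ : (F.q:ℝ) * (‖a‖ / (F.q : ℝ) * ε) = ‖a‖ * ε := by
    field_simp
  have hTmap : ∀ t θ : K, F.Tmap a b (t, g t + θ) = (StmtAux.psi F a b g t + a * θ, t) := by
    intro t θ
    simp only [NAField.Tmap, StmtAux.psi]
    refine Prod.ext ?_ rfl
    show a * (g t + θ) + b * (t ^ F.q - t) = b * (t ^ F.q - t) + a * g t + a * θ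
    ring
  -- distance of two gs-values within a strip
  have hgclose : ∀ s ∈ F.reps, ∀ u₁ u₂ : K, ‖u₁‖ ≤ 1 → ‖u₂‖ ≤ 1 →
      ‖gs s u₁ - gs s u₂‖ ≤ (F.q:ℝ)⁻¹ := by
    intro s hs u₁ u₂ h1 h2
    have := StmtAux.nasub F (gs s u₁ - s) (gs s u₂ - s)
    rw [sub_sub_sub_cancel_right] at this
    exact le_trans this (max_le (hgs s hs u₁ h1).1 (hgs s hs u₂ h2).1)
  have hglip : ∀ s ∈ F.reps, ∀ u₁ u₂ : K, ‖u₁‖ ≤ 1 → ‖u₂‖ ≤ 1 →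
      ‖gs s u₁ - gs s u₂‖ = (F.q:ℝ)⁻¹ * ‖u₁ - u₂‖ := by
    intro s hs u₁ u₂ h1 h2
    have he := hexp (gs s u₁) (gs s u₂) (hgnorm s hs u₁ h1) (hgnorm s hs u₂ h2)
      (hgclose s hs u₁ u₂ h1 h2)
    rw [(hgs s hs u₁ h1).2, (hgs s hs u₂ h2).2] at he
    field_simp
    linarith [he]
  refine ⟨gs, ?_, ?_, ?_, ?_⟩
  · -- each gs s is Lipschitz with values in the strip
    intro s hs
    refine ⟨⟨fun u hu => hgnorm s hs u hu, fun u₁ u₂ h1 h2 => ?_⟩,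
      fun u hu => (hgs s hs u hu).1⟩
    rw [hglip s hs u₁ u₂ h1 h2]
  · -- image equality
    ext p
    constructor
    · rintro ⟨x, ⟨t, θ, ht, hθ, rfl⟩, rfl⟩
      rw [hTmap]
      obtain ⟨s, hs, hts⟩ := F.reps_cover t ht
      have haθ : ‖a * θ‖ ≤ ‖a‖ * ε := by
        rw [norm_mul]
        exact mul_le_mul_of_nonneg_left hθ (norm_nonneg _)
      have hu : ‖StmtAux.psi F a b g t + a * θ‖ ≤ 1 := by
        refine le_trans (F.na _ _) (max_le (StmtAux.psi_norm_le F ha1 hb ht (hgb t ht)) ?_)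
        calc ‖a * θ‖ ≤ ‖a‖ * ε := haθ
        _ ≤ 1 * 1 := mul_le_mul ha1 hε1 hε0.le zero_le_one
        _ = 1 := one_mul _
      set u : K := StmtAux.psi F a b g t + a * θ with hudef
      refine Set.mem_iUnion₂.mpr ⟨s, hs, u, t - gs s u, hu, ?_, ?_⟩
      · -- ‖t - gs s u‖ ≤ δ
        have h1 := (hgs s hs u hu).1
        have h2 := (hgs s hs u hu).2
        have hcl : ‖t - gs s u‖ ≤ (F.q:ℝ)⁻¹ := by
          have := StmtAux.nasub F (t - s) (gs s u - s)
          rw [sub_sub_sub_cancel_right] at this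
          exact le_trans this (max_le hts h1)
        have he := hexp t (gs s u) ht (hgnorm s hs u hu) hcl
        rw [h2] at he
        have hl : ‖StmtAux.psi F a b g t - u‖ = ‖a * θ‖ := by
          rw [hudef, show StmtAux.psi F a b g t - (StmtAux.psi F a b g t + a * θ)
            = -(a * θ) by ring, norm_neg]
        rw [hl] at he
        have : ‖t - gs s u‖ = (F.q:ℝ)⁻¹ * ‖a * θ‖ := by
          field_simp at he ⊢
          linarith [he]
        rw [this]
        calc (F.q:ℝ)⁻¹ * ‖a * θ‖ ≤ (F.q:ℝ)⁻¹ * (‖a‖ * ε) :=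
            mul_le_mul_of_nonneg_left haθ (by positivity)
        _ = ‖a‖ / (F.q : ℝ) * ε := by ring
      · refine Prod.ext rfl ?_
        show t = gs s u + (t - gs s u)
        ring
    · intro hp
      obtain ⟨s, hs, u, θ', hu, hθ', rfl⟩ := Set.mem_iUnion₂.mp hp
      set t : K := gs s u + θ' with htdef
      have hθqi : ‖θ'‖ ≤ (F.q:ℝ)⁻¹ := le_trans hθ' hδqi
      have ht : ‖t‖ ≤ 1 := by
        refine le_trans (F.na _ _) (max_le (hgnorm s hs u hu) ?_)
        exact le_trans hθ' hδ1
      have htg : ‖t - gs s u‖ = ‖θ'‖ := by rw [htdef]; congr 1; ring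
      have he := hexp t (gs s u) ht (hgnorm s hs u hu) (by rw [htg]; exact hθqi)
      rw [(hgs s hs u hu).2, htg] at he
      have hpsi : ‖StmtAux.psi F a b g t - u‖ ≤ ‖a‖ * ε := by
        rw [he, ← hqδ]
        exact mul_le_mul_of_nonneg_left hθ' hqpos.le
      set θ : K := a⁻¹ * (u - StmtAux.psi F a b g t) with hθdef
      have hθbound : ‖θ‖ ≤ ε := by
        rw [hθdef, norm_mul, norm_inv]
        have hna : (0:ℝ) < ‖a‖ := norm_pos_iff.mpr ha0
        rw [norm_sub_rev] at hpsi
        calc ‖a‖⁻¹ * ‖u - StmtAux.psi F a b g t‖ ≤ ‖a‖⁻¹ * (‖a‖ * ε) :=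
            mul_le_mul_of_nonneg_left hpsi (by positivity)
        _ = ε := by field_simp
      refine ⟨(t, g t + θ), ⟨t, θ, ht, hθbound, rfl⟩, ?_⟩
      rw [hTmap]
      refine Prod.ext ?_ rfl
      show StmtAux.psi F a b g t + a * θ = u
      rw [hθdef]
      field_simp
      ring
  · -- injectivity
    intro p₁ _ p₂ _ h
    simp only [NAField.Tmap, Prod.mk.injEq] at h
    obtain ⟨h1, h2⟩ := h
    rw [h2] at h1
    have h3 : a * p₁.2 = a * p₂.2 := add_right_cancel h1
    exact Prod.ext h2 (mul_left_cancel₀ ha0 h3)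
  · -- disjointness
    intro s hs s' hs' hne
    rw [Set.disjoint_left]
    rintro p ⟨u, θ', hu, hθ', rfl⟩ ⟨u₂, θ₂, hu₂, hθ₂, hp2⟩
    have hcoord1 : u = u₂ := congrArg Prod.fst hp2
    have hcoord2 : gs s u + θ' = gs s' u₂ + θ₂ := congrArg Prod.snd hp2
    have hy1 : ‖(gs s u + θ') - s‖ ≤ (F.q:ℝ)⁻¹ := by
      have : (gs s u + θ') - s = (gs s u - s) + θ' := by ring
      rw [this]
      exact le_trans (F.na _ _) (max_le (hgs s hs u hu).1 (le_trans hθ' hδqi))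
    have hy2 : ‖(gs s u + θ') - s'‖ ≤ (F.q:ℝ)⁻¹ := by
      rw [hcoord2]
      have : (gs s' u₂ + θ₂) - s' = (gs s' u₂ - s') + θ₂ := by ring
      rw [this]
      exact le_trans (F.na _ _) (max_le (hgs s' hs' u₂ hu₂).1 (le_trans hθ₂ hδqi))
    have hss : ‖s - s'‖ ≤ (F.q:ℝ)⁻¹ := by
      have := StmtAux.nasub F ((gs s u + θ') - s') ((gs s u + θ') - s)
      rw [sub_sub_sub_cancel_left] at this
      exact le_trans this (max_le hy2 hy1)
    exact absurd hss (not_le.mpr (F.reps_sep s hs s' hs' hne))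
end
end
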